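/- arXiv:2111.08949 — 9 statements merged into one kernel-verified Lean document; each statement's English description precedes it below -/
import Mathlib

section
/- For every n ∈ ℕ and every infinite subset M ⊆ ℝ^n equipped with the max-norm metric, χ(ℝ^n_∞, M) ≤ n+1; that is, there exists a colouring of ℝ^n with n+1 colours such that no colour class contains an isometric copy of M. -/
open Set Filter

/-- The set `A` (in the metric space `β`) contains an isometric copy of the
metric (sub)space `M` (a subset of the metric space `α`). -/
def HasCopy {α β : Type*} [MetricSpace α] [MetricSpace β] (M : Set α) (A : Set β) : Prop :=
  ∃ f : α → β, (∀ x ∈ M, ∀ y ∈ M, dist (f x) (f y) = dist x y) ∧ f '' M ⊆ A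

section Auxiliary

open Cardinal


lemma exists_realizer {n : ℕ} [NeZero n] (x y : Fin n → ℝ) :
    ∃ i, dist x y = |y i - x i| := by
  obtain ⟨i, -, hi⟩ := Finset.exists_mem_eq_sup (Finset.univ : Finset (Fin n))
    Finset.univ_nonempty (fun i => nndist (x i) (y i))
  refine ⟨i, ?_⟩
  rw [dist_pi_def, hi, ← dist_nndist, Real.dist_eq, abs_sub_comm]

lemma coord_le_dist {n : ℕ} (x y : Fin n → ℝ) (i : Fin n) : |y i - x i| ≤ dist x y := by
  rw [abs_sub_comm, ← Real.dist_eq]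
  exact dist_le_pi_dist x y i


/-- One step of the Ramsey extraction. -/
lemma ramsey_step {C : Type*} [Finite C] [Nonempty C] (col : ℕ → ℕ → C)
    (S : {S : Set ℕ // S.Infinite}) :
    ∃ (a : ℕ) (c : C) (S' : {T : Set ℕ // T.Infinite}),
      S'.val ⊆ S.val ∧ a ∈ S.val ∧ ∀ x ∈ S'.val, a < x ∧ col a x = c := by
  obtain ⟨S, hS⟩ := S
  obtain ⟨a, ha⟩ := hS.nonempty
  have hT : (S \ Set.Iic a).Infinite := hS.diff (Set.finite_Iic a)
  have : ∃ c : C, {x ∈ S \ Set.Iic a | col a x = c}.Infinite := by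
    by_contra h
    push_neg at h
    have hsub : (S \ Set.Iic a) ⊆ ⋃ c ∈ (Set.univ : Set C), {x ∈ S \ Set.Iic a | col a x = c} := by
      intro x hx
      exact Set.mem_biUnion (Set.mem_univ (col a x)) ⟨hx, rfl⟩
    exact hT ((Set.finite_univ.biUnion (fun c _ => h c)).subset hsub)
  obtain ⟨c, hc⟩ := this
  refine ⟨a, c, ⟨_, hc⟩, fun x hx => hx.1.1, ha, fun x hx => ⟨not_le.mp hx.1.2, hx.2⟩⟩

/-- Infinite Ramsey theorem for pairs (ordered version). -/
lemma infinite_ramsey_pairs {C : Type*} [Finite C] [Nonempty C] (col : ℕ → ℕ → C) :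
    ∃ (φ : ℕ → ℕ) (c : C), StrictMono φ ∧ ∀ k j, k < j → col (φ k) (φ j) = c := by
  choose A Cc Snext hsub hmem hprop using ramsey_step col
  set S : ℕ → {S : Set ℕ // S.Infinite} :=
    fun m => Nat.rec ⟨Set.univ, Set.infinite_univ⟩ (fun _ ih => Snext ih) m with hS
  have hSsucc : ∀ m, S (m + 1) = Snext (S m) := fun m => rfl
  set a : ℕ → ℕ := fun m => A (S m) with haa
  set c : ℕ → C := fun m => Cc (S m) with hcc
  -- a j ∈ S j
  have hain : ∀ j, a j ∈ (S j).val := fun j => hmem (S j)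
  -- chain: S j ⊆ S (k+1) for k < j
  have hchain : ∀ k j, k < j → (S j).val ⊆ (S (k + 1)).val := by
    intro k j hkj
    induction j with
    | zero => omega
    | succ j ih =>
      rcases Nat.lt_succ_iff_lt_or_eq.mp hkj with h | h
      · exact fun x hx => ih h ((hSsucc j ▸ hsub (S j)) hx)
      · subst h; exact subset_rfl
  have hkey : ∀ k j, k < j → a k < a j ∧ col (a k) (a j) = c k := by
    intro k j hkj
    exact hprop (S k) (a j) (hchain k j hkj (hain j))
  -- pigeonhole on c
  obtain ⟨c₀, hc₀⟩ := Finite.exists_infinite_fiber c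
  have hfib : {m | c m = c₀}.Infinite := by
    rw [← Set.infinite_coe_iff]; exact hc₀
  set ψ : ℕ → ℕ := Nat.nth (fun m => c m = c₀) with hψ
  have hψmono : StrictMono ψ := fun m m' h => (Nat.nth_lt_nth hfib).mpr h
  have hψmem : ∀ m, c (ψ m) = c₀ := fun m => Nat.nth_mem_of_infinite hfib m
  refine ⟨fun m => a (ψ m), c₀, ?_, ?_⟩
  · intro m m' h
    exact (hkey _ _ (hψmono h)).1
  · intro k j hkj
    rw [(hkey _ _ (hψmono hkj)).2, hψmem k]


/-- There is a colouring of `ℝ` by `n+1` colours such that along every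
"signed tail" `a + ς * t k` of an injective sequence `t`, every colour occurs. -/
lemma exists_rainbow_colouring (n : ℕ) (t : ℕ → ℝ) (ht : Function.Injective t) :
    ∃ γ : ℝ → Fin (n + 1), ∀ (a ς : ℝ), (ς = 1 ∨ ς = -1) → ∀ v : Fin (n + 1),
      ∃ k, γ (a + ς * t k) = v := by
  classical
  set G : Set ℝ := (Subfield.closure (Set.range t) : Set ℝ) with hG
  have htG : ∀ k, t k ∈ G := fun k => Subfield.subset_closure ⟨k, rfl⟩
  have hGc : G.Countable := by
    rw [← Set.countable_coe_iff, ← Cardinal.mk_le_aleph0_iff]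
    calc #(Subfield.closure (Set.range t) : Set ℝ) ≤ max #(Set.range t) ℵ₀ :=
          Subfield.cardinalMk_closure_le_max _
      _ ≤ _ := max_le ((Cardinal.mk_range_le).trans (by simp)) le_rfl
  -- the setoid of cosets of G
  have hG0 : (0 : ℝ) ∈ G := by
    show (0:ℝ) ∈ (Subfield.closure (Set.range t) : Set ℝ)
    exact zero_mem _
  set s : Setoid ℝ := ⟨fun x y => x - y ∈ G,
    ⟨fun x => by simpa [sub_self] using hG0,
     fun {x y} h => by simpa [hG] using (Subfield.closure (Set.range t)).neg_mem h,
     fun {x y z} h h' => by simpa [hG] using (Subfield.closure (Set.range t)).add_mem h h'⟩⟩ with hs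
  set rep : ℝ → ℝ := fun x => (Quotient.mk s x).out with hrep
  have hrepG : ∀ x, x - rep x ∈ G := by
    intro x
    have h1 : Quotient.mk s (rep x) = Quotient.mk s x := Quotient.out_eq _
    have h2 : rep x - x ∈ G := Quotient.exact h1
    simpa [hG] using (Subfield.closure (Set.range t)).neg_mem h2
  have hrepeq : ∀ x y, x - y ∈ G → rep x = rep y := by
    intro x y hxy
    have h2 : Quotient.mk s x = Quotient.mk s y := Quotient.sound hxy
    show (Quotient.mk s x).out = (Quotient.mk s y).out
    rw [h2]
  -- enumerate demands
  have hTc : (G ×ˢ (Set.univ : Set (Bool × Fin (n + 1)))).Countable :=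
    hGc.prod Set.countable_univ
  have hTne : (G ×ˢ (Set.univ : Set (Bool × Fin (n + 1)))).Nonempty :=
    ⟨(0, true, 0), ⟨hG0, Set.mem_univ _⟩⟩
  obtain ⟨d, hd⟩ := hTc.exists_eq_range hTne
  have hdmem : ∀ g : ℝ, g ∈ G → ∀ (b : Bool) (v : Fin (n + 1)), ∃ m, d m = (g, b, v) := by
    intro g hg b v
    have : (g, b, v) ∈ G ×ˢ (Set.univ : Set (Bool × Fin (n + 1))) := ⟨hg, Set.mem_univ _⟩
    rw [hd] at this
    obtain ⟨m, hm⟩ := this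
    exact ⟨m, hm⟩
  set sg : Bool → ℝ := fun b => bif b then 1 else -1 with hsg
  have hsgne : ∀ b, sg b ≠ 0 := by intro b; cases b <;> simp [hsg] <;> norm_num
  set pt : ℕ → ℕ → ℝ := fun m k => (d m).1 + sg (d m).2.1 * t k with hpt
  have hptinj : ∀ m, Function.Injective (pt m) := by
    intro m k k' h
    simp only [hpt, add_right_inj] at h
    exact ht (mul_left_cancel₀ (hsgne _) h)
  -- greedy selection of fresh points
  have hstep : ∀ (m : ℕ) (u : Finset ℝ), ∃ k, pt m k ∉ u := by
    intro m u
    by_contra h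
    push_neg at h
    exact (u.finite_toSet.subset (Set.range_subset_iff.mpr h)).not_infinite
      (Set.infinite_range_of_injective (hptinj m))
  set F : ℕ → ℝ × Finset ℝ := fun m => Nat.rec
    (⟨pt 0 (hstep 0 ∅).choose, {pt 0 (hstep 0 ∅).choose}⟩)
    (fun m ih => ⟨pt (m+1) ((hstep (m+1) ih.2).choose), insert (pt (m+1) ((hstep (m+1) ih.2).choose)) ih.2⟩) m
    with hF
  set P : ℕ → ℝ := fun m => (F m).1 with hP
  set U : ℕ → Finset ℝ := fun m => (F m).2 with hU
  have hFsucc : ∀ m, P (m + 1) = pt (m+1) ((hstep (m+1) (U m)).choose) ∧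
      U (m + 1) = insert (P (m+1)) (U m) := fun m => ⟨rfl, rfl⟩
  have hPU : ∀ m, P m ∈ U m := by
    intro m; cases m with
    | zero => exact Finset.mem_singleton_self _
    | succ m => rw [(hFsucc m).2]; exact Finset.mem_insert_self _ _
  have hUmono : ∀ m m', m ≤ m' → U m ⊆ U m' := by
    intro m m' h
    induction m' with
    | zero =>
      have : m = 0 := by omega
      subst this; exact subset_rfl
    | succ j ih =>
      by_cases h' : m ≤ j
      · exact (ih h').trans (by rw [(hFsucc j).2]; exact Finset.subset_insert _ _)
      · have hmj : m = j + 1 := by omega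
        subst hmj; exact subset_rfl
  have hPfresh : ∀ m, P (m + 1) ∉ U m := by
    intro m
    rw [(hFsucc m).1]
    exact (hstep (m+1) (U m)).choose_spec
  have hPinj : Function.Injective P := by
    have key : ∀ m m', m < m' → P m ≠ P m' := by
      intro m m' h hne
      obtain ⟨j, rfl⟩ : ∃ j, m' = j + 1 := ⟨m' - 1, by omega⟩
      exact hPfresh j (hne ▸ hUmono m j (by omega) (hPU m))
    intro m m' h
    by_contra hne
    rcases lt_or_gt_of_ne hne with h' | h'
    · exact key _ _ h' h
    · exact key _ _ h' h.symm
  have hPpt : ∀ m, ∃ k, P m = pt m k := by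
    intro m; cases m with
    | zero => exact ⟨_, rfl⟩
    | succ j => exact ⟨_, (hFsucc j).1⟩
  -- the colouring
  set γ : ℝ → Fin (n + 1) := fun x =>
    if h : ∃ m, P m = x - rep x then (d h.choose).2.2 else 0 with hγ
  refine ⟨γ, ?_⟩
  intro a ς hς v
  have hgG : a - rep a ∈ G := hrepG a
  set b : Bool := decide (ς = 1) with hb
  have hsgb : sg b = ς := by
    rcases hς with h | h <;> subst h <;> simp [hb, hsg] <;> norm_num
  obtain ⟨m, hm⟩ := hdmem (a - rep a) hgG b v
  obtain ⟨k, hk⟩ := hPpt m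
  refine ⟨k, ?_⟩
  have hrepx : rep (a + ς * t k) = rep a := by
    apply hrepeq
    have h1 : (a + ς * t k) - a = ς * t k := by ring
    rw [h1]
    rcases hς with h | h <;> subst h
    · rw [one_mul]; exact htG k
    · rw [neg_one_mul]; exact (Subfield.closure (Set.range t)).neg_mem (htG k)
  have hval : P m = (a + ς * t k) - rep (a + ς * t k) := by
    have h1 : (d m).1 = a - rep a := by rw [hm]
    have h2 : (d m).2.1 = b := by rw [hm]
    rw [hrepx, hk]
    show (d m).1 + sg (d m).2.1 * t k = a + ς * t k - rep a
    rw [h1, h2, hsgb]; ring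
  have hex : ∃ m', P m' = (a + ς * t k) - rep (a + ς * t k) := ⟨m, hval⟩
  rw [hγ]
  simp only [dif_pos hex]
  have : hex.choose = m := hPinj (hex.choose_spec.trans hval.symm)
  rw [this, hm]

/-- Rigidity: an isometric image of an additive chain is affine in some coordinate. -/
lemma rigidity {n : ℕ} [NeZero n] (t : ℕ → ℝ) (ε : ℝ)
    (w : ℕ → Fin n → ℝ)
    (hw : ∀ k j, k < j → dist (w k) (w j) = ε * (t j - t k)) :
    ∃ (i : Fin n) (σ : ℝ), (σ = 1 ∨ σ = -1) ∧
      ∀ k, w k i - w 0 i = σ * (ε * (t k - t 0)) := by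
  classical
  set D : ℕ → ℝ := fun k => ε * (t k - t 0) with hD
  have hD0 : D 0 = 0 := by simp [hD]
  have hdist : ∀ k j, k < j → dist (w k) (w j) = D j - D k := by
    intro k j hkj
    rw [hw k j hkj, hD]; ring
  have hdist0 : ∀ j, 0 < j → dist (w 0) (w j) = D j := by
    intro j hj
    rw [hdist 0 j hj, hD0, sub_zero]
  have step1 : ∀ j, ∃ (i : Fin n) (σ : ℝ), (σ = 1 ∨ σ = -1) ∧
      ∀ k, k ≤ j → w k i - w 0 i = σ * D k := by
    intro j
    rcases Nat.eq_zero_or_pos j with hj | hj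
    · subst hj
      refine ⟨Classical.arbitrary _, 1, Or.inl rfl, ?_⟩
      intro k hk
      have : k = 0 := Nat.le_zero.mp hk
      subst this
      rw [hD0]; ring
    · obtain ⟨i, hi⟩ := exists_realizer (w 0) (w j)
      have hij : |w j i - w 0 i| = D j := by rw [← hi, hdist0 j hj]
      have key : ∀ (σ : ℝ), (σ = 1 ∨ σ = -1) → w j i - w 0 i = σ * D j →
          ∀ k, k ≤ j → w k i - w 0 i = σ * D k := by
        intro σ hσ hj' k hk
        rcases Nat.eq_zero_or_pos k with hk0 | hk0
        · subst hk0; rw [hD0]; ring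
        rcases Nat.lt_or_ge k j with hkj | hkj
        · have h1 : |w k i - w 0 i| ≤ D k := by
            rw [← hdist0 k hk0]; exact coord_le_dist _ _ _
          have h2 : |w j i - w k i| ≤ D j - D k := by
            rw [← hdist k j hkj]; exact coord_le_dist _ _ _
          have h1' := abs_le.mp h1
          have h2' := abs_le.mp h2
          rcases hσ with h | h <;> subst h <;> [skip; skip] <;> nlinarith [h1'.1, h1'.2, h2'.1, h2'.2]
        · have : k = j := le_antisymm hk hkj
          subst this; exact hj'
      rcases abs_cases (w j i - w 0 i) with ⟨h, -⟩ | ⟨h, -⟩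
      · exact ⟨i, 1, Or.inl rfl, key 1 (Or.inl rfl) (by rw [← hij, h]; ring)⟩
      · exact ⟨i, -1, Or.inr rfl, key (-1) (Or.inr rfl) (by rw [← hij, h]; ring)⟩
  choose I Sg hSg hProp using step1
  set bfun : ℕ → Fin n × Bool := fun j => (I j, decide (Sg j = 1)) with hbfun
  obtain ⟨p, hp⟩ := Finite.exists_infinite_fiber bfun
  have hfib : (bfun ⁻¹' {p}).Infinite := (Set.infinite_coe_iff (s := bfun ⁻¹' {p})).mp hp
  set σ : ℝ := bif p.2 then 1 else -1 with hσdef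
  have hfibprop : ∀ j, bfun j = p → I j = p.1 ∧ Sg j = σ := by
    intro j hj
    have h1 : I j = p.1 := by rw [← hj]
    have h2 : decide (Sg j = 1) = p.2 := by rw [← hj]
    refine ⟨h1, ?_⟩
    rcases hSg j with h | h
    · rw [h] at h2
      have hp2 : p.2 = true := by rw [← h2]; simp
      rw [h, hσdef, hp2]; rfl
    · rw [h] at h2
      have hp2 : p.2 = false := by
        rw [← h2]
        simp only [decide_eq_false_iff_not]
        norm_num
      rw [h, hσdef, hp2]; rfl
  refine ⟨p.1, σ, ?_, ?_⟩
  · rcases Bool.eq_false_or_eq_true p.2 with h | h <;> rw [hσdef, h] <;> simp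
  · intro k
    obtain ⟨j, hjmem, hjgt⟩ := hfib.exists_gt k
    obtain ⟨h1, h2⟩ := hfibprop j hjmem
    have := hProp j k (le_of_lt hjgt)
    rw [h1, h2] at this
    exact this


end Auxiliary

/-- For every infinite `M ⊆ ℝ^n_∞` there is a colouring of `ℝ^n` (max metric) with
`n+1` colours such that no colour class contains an isometric copy of `M`;
that is, `χ(ℝ^n_∞, M) ≤ n+1`. -/
theorem chi_infinite_le (n : ℕ) (M : Set (Fin n → ℝ)) (hM : M.Infinite) :
    ∃ c : (Fin n → ℝ) → Fin (n + 1), ∀ i : Fin (n + 1), ¬ HasCopy M {x | c x = i} := by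
  classical
  obtain _ | m := n
  · exfalso
    haveI : Subsingleton (Fin 0 → ℝ) := ⟨fun a b => funext fun i => i.elim0⟩
    haveI : Finite (Fin 0 → ℝ) := Finite.of_subsingleton
    exact hM (Set.toFinite M)
  -- distinct points of M
  set e : ℕ ↪ ↥M := Set.Infinite.natEmbedding M hM with he
  set x : ℕ → (Fin (m + 1) → ℝ) := fun k => ((e k : ↥M) : Fin (m + 1) → ℝ) with hx
  have hxM : ∀ k, x k ∈ M := fun k => (e k).2
  have hxinj : Function.Injective x :=
    fun k j h => e.injective (Subtype.ext h)
  -- realizing coordinates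
  have hreal : ∀ k j : ℕ, ∃ i, dist (x k) (x j) = |x j i - x k i| :=
    fun k j => exists_realizer _ _
  choose I hI using hreal
  obtain ⟨φ, ⟨i₀, b₀⟩, hφmono, hφcol⟩ :=
    infinite_ramsey_pairs (fun k j => ((I k j, decide (x k (I k j) ≤ x j (I k j))) : Fin (m+1) × Bool))
  set y : ℕ → (Fin (m + 1) → ℝ) := fun k => x (φ k) with hy
  set t : ℕ → ℝ := fun k => y k i₀ with ht
  set ε : ℝ := bif b₀ then 1 else -1 with hε
  have hεpm : ε = 1 ∨ ε = -1 := by cases b₀ <;> [right; left] <;> rw [hε] <;> rfl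
  have hyd : ∀ k j, k < j → dist (y k) (y j) = ε * (t j - t k) := by
    intro k j hkj
    have hc := hφcol k j hkj
    have hc1 : I (φ k) (φ j) = i₀ := congrArg Prod.fst hc
    have hc2 : decide (x (φ k) (I (φ k) (φ j)) ≤ x (φ j) (I (φ k) (φ j))) = b₀ :=
      congrArg Prod.snd hc
    have hd := hI (φ k) (φ j)
    rw [hc1] at hd hc2
    have hty : dist (y k) (y j) = |t j - t k| := hd
    cases b₀ with
    | true =>
      have hle : x (φ k) i₀ ≤ x (φ j) i₀ := of_decide_eq_true hc2
      have : (t k : ℝ) ≤ t j := hle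
      rw [hty, abs_of_nonneg (by linarith), hε]
      show t j - t k = 1 * (t j - t k)
      ring
    | false =>
      have hlt : ¬ (x (φ k) i₀ ≤ x (φ j) i₀) := of_decide_eq_false hc2
      have : (t j : ℝ) < t k := not_le.mp hlt
      rw [hty, abs_of_nonpos (by linarith), hε]
      show -(t j - t k) = -1 * (t j - t k)
      ring
  have htinj : Function.Injective t := by
    have key : ∀ k j : ℕ, k < j → t k = t j → False := by
      intro k j hlt hteq
      have hd := hyd k j hlt
      rw [hteq, sub_self, mul_zero] at hd
      have hyeq : y k = y j := dist_eq_zero.mp hd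
      have : φ k = φ j := hxinj hyeq
      have := hφmono hlt
      omega
    intro k j h
    by_contra hne
    rcases lt_or_gt_of_ne hne with hlt | hlt
    · exact key k j hlt h
    · exact key j k hlt h.symm
  obtain ⟨γ, hγ⟩ := exists_rainbow_colouring (m + 1) t htinj
  -- the colouring
  have hcex : ∀ z : Fin (m + 1) → ℝ, ∃ v : Fin (m + 2), ∀ i, γ (z i) ≠ v := by
    intro z
    by_contra h
    push_neg at h
    have hsurj : Function.Surjective (fun i => γ (z i)) := by
      intro v
      obtain ⟨i, hi⟩ := h v
      exact ⟨i, hi⟩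
    have := Fintype.card_le_of_surjective _ hsurj
    simp only [Fintype.card_fin] at this
    omega
  choose c hc using hcex
  refine ⟨c, ?_⟩
  rintro v ⟨f, hfiso, hfim⟩
  set w : ℕ → (Fin (m + 1) → ℝ) := fun k => f (y k) with hw
  have hwmem : ∀ k, c (w k) = v := by
    intro k
    exact hfim ⟨y k, hxM (φ k), rfl⟩
  have hwdist : ∀ k j, k < j → dist (w k) (w j) = ε * (t j - t k) := by
    intro k j hkj
    rw [hw]
    show dist (f (y k)) (f (y j)) = ε * (t j - t k)
    rw [hfiso (y k) (hxM (φ k)) (y j) (hxM (φ j))]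
    exact hyd k j hkj
  obtain ⟨iS, σ, hσpm, hrig⟩ := rigidity t ε w hwdist
  set ς : ℝ := σ * ε with hς
  have hςpm : ς = 1 ∨ ς = -1 := by
    rcases hσpm with h1 | h1 <;> rcases hεpm with h2 | h2 <;>
      rw [hς, h1, h2] <;> norm_num
  set a : ℝ := w 0 iS - ς * t 0 with ha
  have hwk : ∀ k, w k iS = a + ς * t k := by
    intro k
    have h := hrig k
    rw [ha, hς]
    nlinarith [h]
  obtain ⟨k, hk⟩ := hγ a ς hςpm v
  have hne := hc (w k) iS
  rw [hwk k] at hne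
  rw [hwmem k] at hne
  exact hne hk
end

section
/- Let M be an integer metric space, i.e., a metric space in which all pairwise distances between distinct points are positive integers. Then for all n ∈ ℕ, χ(ℝ^n_∞, M) = χ(ℤ^n_∞, M), where ℤ^n_∞ is ℤ^n equipped with the max-norm metric. -/
open Set Filter

lemma cast_isometry (n : ℕ) : Isometry (fun (x : Fin n → ℤ) (i : Fin n) => (x i : ℝ)) := by
  apply Isometry.of_dist_eq
  intro x y
  apply le_antisymm
  · rw [dist_pi_le_iff dist_nonneg]
    intro i
    rw [Real.dist_eq, ← Int.dist_eq]
    exact dist_le_pi_dist x y i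
  · rw [dist_pi_le_iff dist_nonneg]
    intro i
    rw [Int.dist_eq, ← Real.dist_eq]
    exact dist_le_pi_dist (fun j => ((x j : ℤ) : ℝ)) (fun j => ((y j : ℤ) : ℝ)) i

lemma floor_isometry (M : Type*) [MetricSpace M]
    (hM : ∀ x y : M, x ≠ y → ∃ m : ℕ, 0 < m ∧ dist x y = (m : ℝ)) (n : ℕ)
    (f : M → (Fin n → ℝ)) (hf : Isometry f) :
    Isometry (fun x (i : Fin n) => ⌊f x i⌋) := by
  apply Isometry.of_dist_eq
  intro x y
  by_cases hxy : x = y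
  · subst hxy; simp
  obtain ⟨m, hm, hd⟩ := hM x y hxy
  have hfd : dist (f x) (f y) = m := (hf.dist_eq x y).trans hd
  rw [hd]
  have hcoord : ∀ i, |f x i - f y i| ≤ (m : ℝ) := by
    intro i
    rw [← Real.dist_eq, ← hfd]
    exact dist_le_pi_dist (f x) (f y) i
  have hn : n ≠ 0 := by
    rintro rfl
    have : f x = f y := Subsingleton.elim _ _
    rw [this, dist_self] at hfd
    exact_mod_cast hm.ne (by exact_mod_cast hfd)
  have : Nonempty (Fin n) := ⟨⟨0, Nat.pos_of_ne_zero hn⟩⟩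
  apply le_antisymm
  · rw [dist_pi_le_iff (by positivity)]
    intro i
    rw [Int.dist_eq]
    have h1 := Int.floor_le (f x i)
    have h2 := Int.lt_floor_add_one (f x i)
    have h3 := Int.floor_le (f y i)
    have h4 := Int.lt_floor_add_one (f y i)
    have habs := abs_le.1 (hcoord i)
    have hlt1 : (⌊f x i⌋ : ℝ) - ⌊f y i⌋ < (m : ℝ) + 1 := by
      obtain ⟨ha, hb⟩ := habs; linarith
    have hlt2 : -((m : ℝ) + 1) < (⌊f x i⌋ : ℝ) - ⌊f y i⌋ := by
      obtain ⟨ha, hb⟩ := habs; linarith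
    have hi1 : ⌊f x i⌋ - ⌊f y i⌋ < (m : ℤ) + 1 := by exact_mod_cast hlt1
    have hi2 : -((m : ℤ) + 1) < ⌊f x i⌋ - ⌊f y i⌋ := by exact_mod_cast hlt2
    have hZ : |⌊f x i⌋ - ⌊f y i⌋| ≤ (m : ℤ) := by
      rw [abs_le]; exact ⟨by omega, by omega⟩
    exact_mod_cast hZ
  · obtain ⟨i, -, hi⟩ := Finset.exists_mem_eq_sup (Finset.univ : Finset (Fin n))
      Finset.univ_nonempty (fun i => nndist (f x i) (f y i))
    have h5 : dist (f x i) (f y i) = (m : ℝ) := by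
      rw [dist_nndist, nndist_pi_def, hi, ← dist_nndist] at hfd
      exact hfd
    rcases (abs_eq (by positivity : (0:ℝ) ≤ (m:ℝ))).1 (by rwa [Real.dist_eq] at h5) with h | h
    · have hfl : ⌊f x i⌋ = ⌊f y i⌋ + (m : ℤ) := by
        have hx : f x i = f y i + ((m : ℤ) : ℝ) := by push_cast; linarith
        rw [hx, Int.floor_add_intCast]
      calc (m : ℝ) = dist (⌊f x i⌋) (⌊f y i⌋) := by
            rw [Int.dist_eq, hfl]; push_cast; simp
        _ ≤ _ := dist_le_pi_dist (fun i => ⌊f x i⌋) (fun i => ⌊f y i⌋) i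
    · have hfl : ⌊f y i⌋ = ⌊f x i⌋ + (m : ℤ) := by
        have hx : f y i = f x i + ((m : ℤ) : ℝ) := by push_cast; linarith
        rw [hx, Int.floor_add_intCast]
      calc (m : ℝ) = dist (⌊f x i⌋) (⌊f y i⌋) := by
            rw [Int.dist_eq, hfl]; push_cast; rw [abs_sub_comm]; simp
        _ ≤ _ := dist_le_pi_dist (fun i => ⌊f x i⌋) (fun i => ⌊f y i⌋) i

/-- For an integer metric space `M` (all pairwise distances between distinct points are
positive integers), the chromatic numbers of `ℝ^n` and `ℤ^n` (both with the max-norm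
metric) with forbidden subspace `M` coincide. -/
theorem chi_real_eq_chi_int (M : Type*) [MetricSpace M]
    (hM : ∀ x y : M, x ≠ y → ∃ m : ℕ, 0 < m ∧ dist x y = (m : ℝ)) (n : ℕ) :
    sInf {N : ℕ | ∃ c : (Fin n → ℝ) → Fin N, ∀ i : Fin N,
        ¬ ∃ f : M → (Fin n → ℝ), Isometry f ∧ Set.range f ⊆ {x | c x = i}}
  = sInf {N : ℕ | ∃ c : (Fin n → ℤ) → Fin N, ∀ i : Fin N,
        ¬ ∃ f : M → (Fin n → ℤ), Isometry f ∧ Set.range f ⊆ {x | c x = i}} := by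
  congr 1
  ext N
  constructor
  · rintro ⟨c, hc⟩
    refine ⟨fun x => c (fun i => (x i : ℝ)), fun i ⟨f, hf, hr⟩ => ?_⟩
    refine hc i ⟨fun m j => (f m j : ℝ), (cast_isometry n).comp hf, ?_⟩
    rintro _ ⟨z, rfl⟩
    exact hr ⟨z, rfl⟩
  · rintro ⟨c, hc⟩
    refine ⟨fun x => c (fun i => ⌊x i⌋), fun i ⟨f, hf, hr⟩ => ?_⟩
    refine hc i ⟨fun m j => ⌊f m j⌋, floor_isometry M hM n f hf, ?_⟩
    rintro _ ⟨z, rfl⟩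
    exact hr ⟨z, rfl⟩
end

section
/- Let k, n ∈ ℕ and let λ_1, …, λ_k be positive reals with partial sums σ_r = λ_1+…+λ_r (σ_0 = 0). A sequence (x^0, …, x^k) of points in ℝ^n satisfies ‖x^r − x^l‖_∞ = σ_r − σ_l for all 0 ≤ l < r ≤ k (i.e., is an isometric copy of the baton B(λ_1,…,λ_k) in that order) if and only if the following two conditions hold: (1) there exists a coordinate i ∈ {1,…,n} such that the sequence (x_i^0, …, x_i^k) of i-th coordinates is either a translation of (σ_0, …, σ_k) or a translation of (−σ_0, …, −σ_k); (2) for every coordinate j ∈ {1,…,n} and every r ∈ {1,…,k}, |x_j^r − x_j^{r−1}| ≤ λ_r. -/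
open Set Filter

/-- A sequence `x⁰,…,xᵏ` in `ℝ^n` (max metric) is an isometric copy of the baton
`B(λ₁,…,λ_k)` in that order (i.e. `‖xʳ − xˡ‖_∞ = σ_r − σ_l` for all `l < r ≤ k`,
where `σ_r = λ₁ + ⋯ + λ_r`) if and only if (1) some coordinate sequence
`(x_i⁰,…,x_iᵏ)` is a translation of `(σ₀,…,σ_k)` or of `(−σ₀,…,−σ_k)`, and
(2) `|x_jʳ − x_j^{r−1}| ≤ λ_r` for all coordinates `j` and all `1 ≤ r ≤ k`. -/
theorem baton_embed_iff (k n : ℕ) (hk : 0 < k) (hn : 0 < n) (lam : ℕ → ℝ)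
    (hpos : ∀ j < k, 0 < lam j) (x : ℕ → Fin n → ℝ) :
    (∀ l r : ℕ, l < r → r ≤ k →
        dist (x r) (x l) = ∑ j ∈ Finset.range r, lam j - ∑ j ∈ Finset.range l, lam j)
    ↔ ((∃ i : Fin n,
          (∃ c : ℝ, ∀ r ≤ k, x r i = c + ∑ j ∈ Finset.range r, lam j) ∨
          (∃ c : ℝ, ∀ r ≤ k, x r i = c - ∑ j ∈ Finset.range r, lam j)) ∧
        ∀ j : Fin n, ∀ r < k, |x (r + 1) j - x r j| ≤ lam r) := by
  set S : ℕ → ℝ := fun r => ∑ j ∈ Finset.range r, lam j with hS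
  have hSmono : ∀ l r : ℕ, l ≤ r → r ≤ k → S l ≤ S r := by
    intro l r hlr hrk
    apply Finset.sum_le_sum_of_subset_of_nonneg (Finset.range_subset_range.mpr hlr)
    intro j hj _
    exact (hpos j (lt_of_lt_of_le (Finset.mem_range.mp hj) hrk)).le
  have hSsucc : ∀ m : ℕ, S (m + 1) = S m + lam m := by
    intro m; simp [hS, Finset.sum_range_succ]
  have hS0 : S 0 = 0 := by simp [hS]
  haveI : Nonempty (Fin n) := Fin.pos_iff_nonempty.mp hn
  constructor
  · intro h
    have hA : ∀ (i : Fin n) (l r : ℕ), l ≤ r → r ≤ k → |x r i - x l i| ≤ S r - S l := by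
      intro i l r hlr hrk
      rcases eq_or_lt_of_le hlr with rfl | hlt
      · simp
      · calc |x r i - x l i| = dist (x r i) (x l i) := (Real.dist_eq _ _).symm
          _ ≤ dist (x r) (x l) := dist_le_pi_dist _ _ i
          _ = S r - S l := h l r hlt hrk
    refine ⟨?_, ?_⟩
    · obtain ⟨i, hi⟩ : ∃ i : Fin n, dist (x k) (x 0) = dist (x k i) (x 0 i) := by
        obtain ⟨i, _, hi⟩ := Finset.exists_mem_eq_sup Finset.univ Finset.univ_nonempty
          (fun b => nndist (x k b) (x 0 b))
        exact ⟨i, by rw [dist_nndist, nndist_pi_def, hi, ← dist_nndist]⟩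
      have hi' : |x k i - x 0 i| = S k - S 0 := by
        rw [← Real.dist_eq, ← hi]; exact h 0 k hk le_rfl
      have hnn : (0 : ℝ) ≤ S k - S 0 := by linarith [hSmono 0 k (Nat.zero_le k) le_rfl]
      rcases (abs_eq hnn).mp hi' with hc | hc
      · refine ⟨i, Or.inl ⟨x 0 i, ?_⟩⟩
        intro r hrk
        have h1 := abs_le.mp (hA i 0 r (Nat.zero_le r) hrk)
        have h2 := abs_le.mp (hA i r k hrk le_rfl)
        have : x r i - x 0 i = S r - S 0 := by
          linarith [h1.1, h1.2, h2.1, h2.2]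
        linarith [this]
      · refine ⟨i, Or.inr ⟨x 0 i, ?_⟩⟩
        intro r hrk
        have h1 := abs_le.mp (hA i 0 r (Nat.zero_le r) hrk)
        have h2 := abs_le.mp (hA i r k hrk le_rfl)
        have : x r i - x 0 i = -(S r - S 0) := by linarith [h1.1, h1.2, h2.1, h2.2]
        linarith [this]
    · intro j r hrk
      have := hA j r (r + 1) (Nat.le_succ r) hrk
      have hs := hSsucc r
      linarith [this]
  · rintro ⟨⟨i, hi⟩, h2⟩ l r hlr hrk
    have key : ∀ j : Fin n, ∀ m, l ≤ m → m ≤ k → |x m j - x l j| ≤ S m - S l := by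
      intro j m
      induction m with
      | zero =>
        intro h0 _
        interval_cases l
        simp
      | succ m ih =>
        intro hlm hmk
        rcases eq_or_lt_of_le hlm with rfl | hlt
        · simp
        · have hlm' : l ≤ m := Nat.lt_succ_iff.mp hlt
          have h1 := ih hlm' (Nat.le_of_succ_le hmk)
          have h3 := h2 j m (Nat.lt_of_succ_le hmk)
          have hs := hSsucc m
          calc |x (m + 1) j - x l j| ≤ |x (m + 1) j - x m j| + |x m j - x l j| :=
                abs_sub_le _ _ _
            _ ≤ S (m + 1) - S l := by linarith
    have hnn : (0 : ℝ) ≤ S r - S l := by linarith [hSmono l r hlr.le hrk]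
    have hlk : l ≤ k := hlr.le.trans hrk
    have hlow : S r - S l ≤ dist (x r) (x l) := by
      have hval : |x r i - x l i| = S r - S l := by
        rcases hi with ⟨c, hc⟩ | ⟨c, hc⟩
        · rw [hc r hrk, hc l hlk]
          rw [show c + S r - (c + S l) = S r - S l by ring, abs_of_nonneg hnn]
        · rw [hc r hrk, hc l hlk]
          rw [show c - S r - (c - S l) = -(S r - S l) by ring, abs_neg, abs_of_nonneg hnn]
      calc S r - S l = |x r i - x l i| := hval.symm
        _ = dist (x r i) (x l i) := (Real.dist_eq _ _).symm
        _ ≤ dist (x r) (x l) := dist_le_pi_dist _ _ i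
    have hup : dist (x r) (x l) ≤ S r - S l := by
      rw [dist_pi_le_iff hnn]
      intro j
      rw [Real.dist_eq]
      exact key j r hlr.le hrk
    linarith
end

section
/- Let k ∈ ℕ, let λ_1, …, λ_k be positive reals, and set B = B(λ_1,…,λ_k). Then for all n ∈ ℕ and all subsets A ⊆ ℝ, the Cartesian power A^n ⊆ ℝ^n (with the max-norm metric) contains no isometric copy of B if and only if A is B-tr-free, i.e., A contains neither B+x nor −B+x for any x ∈ ℝ. -/
open Set Filter

/-- The baton `B(λ₁,…,λ_k)`: the set of partial sums `σ₀,…,σ_k` of `λ₁,…,λ_k`. -/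
noncomputable def baton (lam : ℕ → ℝ) (k : ℕ) : Set ℝ :=
  (fun r => ∑ j ∈ Finset.range r, lam j) '' Set.Iic k

/-- For a baton `B = B(λ₁,…,λ_k)` and any `A ⊆ ℝ`, the power `A^n ⊆ ℝ^n` (max metric)
contains no isometric copy of `B` iff `A` is `B`-tr-free, i.e. `A` contains neither
`B + x` nor `−B + x` for any `x ∈ ℝ`. -/
theorem power_baton_free_iff (k : ℕ) (hk : 0 < k) (lam : ℕ → ℝ)
    (hpos : ∀ j < k, 0 < lam j) (n : ℕ) (hn : 0 < n) (A : Set ℝ) :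
    ¬ HasCopy (baton lam k) {x : Fin n → ℝ | ∀ i, x i ∈ A}
    ↔ ∀ x : ℝ, ¬ ((fun s => s + x) '' baton lam k ⊆ A) ∧
               ¬ ((fun s => -s + x) '' baton lam k ⊆ A) := by
  set σ : ℕ → ℝ := fun r => ∑ j ∈ Finset.range r, lam j with hσdef
  have hle : ∀ r s : ℕ, r ≤ s → s ≤ k → σ r ≤ σ s := by
    intro r s hrs hsk
    apply Finset.sum_le_sum_of_subset_of_nonneg (Finset.range_subset_range.2 hrs)
    intro j hj _
    exact (hpos j (lt_of_lt_of_le (Finset.mem_range.1 hj) hsk)).le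
  have h0 : σ 0 = 0 := by simp [hσdef]
  have hkpos : 0 < σ k := by
    apply Finset.sum_pos
    · intro j hj; exact hpos j (Finset.mem_range.1 hj)
    · exact ⟨0, Finset.mem_range.2 hk⟩
  have hmem : ∀ r ≤ k, σ r ∈ baton lam k := fun r hr => ⟨r, hr, rfl⟩
  haveI : Nonempty (Fin n) := ⟨⟨0, hn⟩⟩
  constructor
  · intro hno x
    constructor
    · intro hsub
      apply hno
      refine ⟨fun t => fun _ => t + x, ?_, ?_⟩
      · intro a _ b _
        rw [dist_pi_const]
        simp [Real.dist_eq]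
      · rintro _ ⟨b, hb, rfl⟩ i
        exact hsub ⟨b, hb, rfl⟩
    · intro hsub
      apply hno
      refine ⟨fun t => fun _ => -t + x, ?_, ?_⟩
      · intro a _ b _
        rw [dist_pi_const]
        simp [Real.dist_eq, abs_sub_comm]
      · rintro _ ⟨b, hb, rfl⟩ i
        exact hsub ⟨b, hb, rfl⟩
  · rintro hfree ⟨f, hiso, hsub⟩
    have hdist : ∀ r ≤ k, ∀ s ≤ k, r ≤ s → dist (f (σ r)) (f (σ s)) = σ s - σ r := by
      intro r hr s hs hrs
      rw [hiso _ (hmem r hr) _ (hmem s hs), Real.dist_eq, abs_sub_comm,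
        abs_of_nonneg (sub_nonneg.2 (hle r s hrs hs))]
    obtain ⟨i, -, hi⟩ := Finset.exists_mem_eq_sup Finset.univ Finset.univ_nonempty
      (fun i => nndist (f (σ 0) i) (f (σ k) i))
    have hcoord : dist (f (σ 0) i) (f (σ k) i) = dist (f (σ 0)) (f (σ k)) := by
      rw [dist_nndist, dist_nndist, nndist_pi_def, hi]
    have hik : |f (σ 0) i - f (σ k) i| = σ k := by
      rw [← Real.dist_eq, hcoord, hdist 0 (Nat.zero_le k) k le_rfl (Nat.zero_le k), h0, sub_zero]
    have hbd1 : ∀ r ≤ k, |f (σ 0) i - f (σ r) i| ≤ σ r := by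
      intro r hr
      rw [← Real.dist_eq]
      calc dist (f (σ 0) i) (f (σ r) i) ≤ dist (f (σ 0)) (f (σ r)) := dist_le_pi_dist _ _ i
        _ = σ r - σ 0 := hdist 0 (Nat.zero_le k) r hr (Nat.zero_le r)
        _ = σ r := by rw [h0, sub_zero]
    have hbd2 : ∀ r ≤ k, |f (σ r) i - f (σ k) i| ≤ σ k - σ r := by
      intro r hr
      rw [← Real.dist_eq]
      calc dist (f (σ r) i) (f (σ k) i) ≤ dist (f (σ r)) (f (σ k)) := dist_le_pi_dist _ _ i
        _ = σ k - σ r := hdist r hr k le_rfl hr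
    have hA : ∀ r ≤ k, f (σ r) i ∈ A := fun r hr =>
      hsub ⟨σ r, hmem r hr, rfl⟩ i
    rcases abs_eq hkpos.le |>.1 hik with hcase | hcase
    · -- f (σ 0) i - f (σ k) i = σ k : decreasing, gives -B + x
      refine (hfree (f (σ 0) i)).2 ?_
      rintro _ ⟨b, ⟨r, hr, rfl⟩, rfl⟩
      have h1 := abs_le.1 (hbd1 r hr)
      have h2 := abs_le.1 (hbd2 r hr)
      have : -σ r + f (σ 0) i = f (σ r) i := by linarith [h1.1, h1.2, h2.1, h2.2]
      show -σ r + f (σ 0) i ∈ A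
      rw [this]
      exact hA r hr
    · -- f (σ 0) i - f (σ k) i = -σ k : increasing, gives B + x
      refine (hfree (f (σ 0) i)).1 ?_
      rintro _ ⟨b, ⟨r, hr, rfl⟩, rfl⟩
      have h1 := abs_le.1 (hbd1 r hr)
      have h2 := abs_le.1 (hbd2 r hr)
      have : σ r + f (σ 0) i = f (σ r) i := by linarith [h1.1, h1.2, h2.1, h2.2]
      show σ r + f (σ 0) i ∈ A
      rw [this]
      exact hA r hr
end

section
/- Let k, n ∈ ℕ and let A ⊆ ℝ^n (with the max-norm metric). If A contains no isometric copy of any (k+1)-point baton B(λ_1,…,λ_k) (for any positive reals λ_1,…,λ_k), then |A| ≤ k^n. Moreover, this bound is tight: the set {1,…,k}^n has cardinality k^n and contains no isometric copy of any (k+1)-point baton. -/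
open Set Filter

-- auxiliary lemmas
lemma exists_coord {n : ℕ} (hn : 0 < n) (x y : Fin n → ℝ) :
    ∃ i, dist x y = dist (x i) (y i) := by
  have : Nonempty (Fin n) := Fin.pos_iff_nonempty.mp hn
  have hne : (Finset.univ : Finset (Fin n)).Nonempty := Finset.univ_nonempty
  obtain ⟨i, _, hi⟩ := Finset.exists_mem_eq_sup Finset.univ hne (fun i => nndist (x i) (y i))
  exact ⟨i, by rw [dist_pi_def, hi]; rfl⟩

lemma one_le_abs_nat_cast_sub {a b : ℕ} (h : a ≠ b) : 1 ≤ |(a:ℝ) - b| := by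
  have h1 : ((a:ℤ) - b) ≠ 0 := sub_ne_zero.mpr (by exact_mod_cast h)
  have h2 : (1:ℤ) ≤ |(a:ℤ) - b| := Int.one_le_abs h1
  have h3 : ((1:ℤ):ℝ) ≤ ((|(a:ℤ) - b| : ℤ) : ℝ) := Int.cast_le.mpr h2
  push_cast at h3
  linarith [h3]

/-- Relation: `y` follows `x` in coordinate `i` within `A`. -/
def BRel {n : ℕ} (A : Set (Fin n → ℝ)) (i : Fin n) (x y : Fin n → ℝ) : Prop :=
  x ∈ A ∧ y ∈ A ∧ dist x y = y i - x i ∧ x ≠ y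

lemma chain_dist {n : ℕ} (c : ℕ → Fin n → ℝ) (i : Fin n) (m : ℕ)
    (h : ∀ j < m, dist (c j) (c (j+1)) = c (j+1) i - c j i)
    {r r' : ℕ} (hrr : r ≤ r') (hr' : r' ≤ m) :
    dist (c r) (c r') = ∑ j ∈ Finset.Ico r r', dist (c j) (c (j+1)) ∧
    c r' i - c r i = ∑ j ∈ Finset.Ico r r', dist (c j) (c (j+1)) := by
  revert hr'
  induction r', hrr using Nat.le_induction with
  | base => intro _; simp
  | succ r' hrr ih =>
    intro hr'
    obtain ⟨ihd, ihc⟩ := ih (by omega)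
    have hstep : dist (c r') (c (r'+1)) = c (r'+1) i - c r' i := h r' (by omega)
    have hsum : ∑ j ∈ Finset.Ico r (r'+1), dist (c j) (c (j+1))
        = (∑ j ∈ Finset.Ico r r', dist (c j) (c (j+1))) + dist (c r') (c (r'+1)) :=
      Finset.sum_Ico_succ_top hrr _
    have hub : dist (c r) (c (r'+1)) ≤ dist (c r) (c r') + dist (c r') (c (r'+1)) :=
      dist_triangle _ _ _
    have hco : dist (c r (i)) (c (r'+1) i) ≤ dist (c r) (c (r'+1)) := dist_le_pi_dist _ _ i
    rw [Real.dist_eq] at hco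
    have habs : c (r'+1) i - c r i ≤ |c r i - c (r'+1) i| := by
      rw [abs_sub_comm]; exact le_abs_self _
    constructor
    · rw [hsum]; apply le_antisymm <;> linarith
    · rw [hsum]; linarith

lemma no_chain {n k : ℕ} (hk : 0 < k) (A : Set (Fin n → ℝ))
    (hA : ∀ lam : ℕ → ℝ, (∀ j < k, 0 < lam j) → ¬ HasCopy (baton lam k) A)
    (i : Fin n) (c : ℕ → Fin n → ℝ) :
    ¬ (∀ j < k, BRel A i (c j) (c (j+1))) := by
  intro hc
  set lam : ℕ → ℝ := fun j => dist (c j) (c (j+1)) with hlam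
  have hpos : ∀ j < k, 0 < lam j := fun j hj => dist_pos.mpr (hc j hj).2.2.2
  apply hA lam hpos
  set σ : ℕ → ℝ := fun r => ∑ j ∈ Finset.range r, lam j with hσ
  have hcoord : ∀ j < k, dist (c j) (c (j+1)) = c (j+1) i - c j i := fun j hj => (hc j hj).2.2.1
  have hdist : ∀ r r', r ≤ r' → r' ≤ k → dist (c r) (c r') = σ r' - σ r := by
    intro r r' h1 h2
    rw [(chain_dist c i k hcoord h1 h2).1, hσ]
    simp only
    rw [Finset.sum_Ico_eq_sub _ h1]
  have hσmono : ∀ r r', r < r' → r' ≤ k → σ r < σ r' := by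
    intro r r' h1 h2
    have : 0 < ∑ j ∈ Finset.Ico r r', lam j := by
      apply Finset.sum_pos
      · intro j hj
        exact hpos j (by simp at hj; omega)
      · exact ⟨r, by simp; omega⟩
    have hs : σ r' - σ r = ∑ j ∈ Finset.Ico r r', lam j := by
      rw [hσ]; simp only; rw [Finset.sum_Ico_eq_sub _ (le_of_lt h1)]
    linarith
  have hinj : Set.InjOn σ (Set.Iic k) := by
    intro a ha b hb hab
    by_contra hne
    rcases lt_or_gt_of_ne hne with h | h
    · exact absurd hab (ne_of_lt (hσmono a b h hb))
    · exact absurd hab.symm (ne_of_lt (hσmono b a h ha))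
  set g : ℝ → ℕ := Function.invFunOn σ (Set.Iic k) with hg
  have hginv : ∀ r ≤ k, g (σ r) = r := by
    intro r hr
    have h1 : σ (g (σ r)) = σ r := Function.invFunOn_eq ⟨r, hr, rfl⟩
    have h2 : g (σ r) ∈ Set.Iic k := Function.invFunOn_mem ⟨r, hr, rfl⟩
    exact hinj h2 hr h1
  have hmem : ∀ r ≤ k, c r ∈ A := by
    intro r hr
    rcases lt_or_eq_of_le hr with h | h
    · exact (hc r h).1
    · subst h
      obtain ⟨m, rfl⟩ : ∃ m, r = m + 1 := ⟨r - 1, by omega⟩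
      exact (hc m (by omega)).2.1
  refine ⟨fun t => c (g t), ?_, ?_⟩
  · rintro x ⟨r, hr, rfl⟩ y ⟨r', hr', rfl⟩
    simp only [Set.mem_Iic] at hr hr'
    change dist (c (g (σ r))) (c (g (σ r'))) = dist (σ r) (σ r')
    simp only [hginv r hr, hginv r' hr']
    rcases le_total r r' with h | h
    · rw [hdist r r' h hr', Real.dist_eq, abs_of_nonpos (by
        rcases lt_or_eq_of_le h with h' | h'
        · linarith [hσmono r r' h' hr']
        · subst h'; simp)]
      ring
    · rw [dist_comm, hdist r' r h hr, Real.dist_eq, abs_of_nonneg (by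
        rcases lt_or_eq_of_le h with h' | h'
        · linarith [hσmono r' r h' hr]
        · subst h'; simp)]
  · rintro x ⟨t, ⟨r, hr, rfl⟩, rfl⟩
    simp only [Set.mem_Iic] at hr
    show c (g (σ r)) ∈ A
    rw [hginv r hr]
    exact hmem r hr
section
lemma part1 {n k : ℕ} (hk : 0 < k) (hn : 0 < n) (A : Set (Fin n → ℝ))
    (hA : ∀ lam : ℕ → ℝ, (∀ j < k, 0 < lam j) → ¬ HasCopy (baton lam k) A) :
    A.Finite ∧ A.ncard ≤ k ^ n := by
  classical
  set S : Fin n → (Fin n → ℝ) → Set ℕ := fun i x =>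
    {m | ∃ c : ℕ → Fin n → ℝ, (∀ j < m, BRel A i (c j) (c (j+1))) ∧ c m = x} with hS
  have h0 : ∀ i x, 0 ∈ S i x := fun i x => ⟨fun _ => x, fun j hj => absurd hj (by omega), rfl⟩
  have hbd : ∀ i x m, m ∈ S i x → m < k := by
    intro i x m ⟨c, hc, _⟩
    by_contra h
    exact no_chain hk A hA i c (fun j hj => hc j (by omega))
  have hbdd : ∀ i x, BddAbove (S i x) := fun i x =>
    ⟨k, fun m hm => le_of_lt (hbd i x m hm)⟩
  set ht : Fin n → (Fin n → ℝ) → ℕ := fun i x => sSup (S i x) with hht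
  have htmem : ∀ i x, ht i x ∈ S i x := fun i x => Nat.sSup_mem ⟨0, h0 i x⟩ (hbdd i x)
  have htlt : ∀ i x, ht i x < k := fun i x => hbd i x _ (htmem i x)
  have hstep : ∀ i x y, BRel A i x y → ht i x < ht i y := by
    intro i x y hxy
    obtain ⟨c, hc, hcm⟩ := htmem i x
    set m := ht i x
    have hmem : m + 1 ∈ S i y := by
      refine ⟨fun j => if j ≤ m then c j else y, fun j hj => ?_, by simp⟩
      rcases lt_or_eq_of_le (Nat.lt_succ_iff.mp hj) with h | h
      · simpa [Nat.le_of_lt h, Nat.succ_le_of_lt h] using hc j h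
      · subst h
        simpa [hcm] using hxy
    exact Nat.lt_of_succ_le (le_csSup (hbdd i y) hmem)
  -- the injection
  have key : ∀ x ∈ A, ∀ y ∈ A, x ≠ y → ∃ i, ht i x ≠ ht i y := by
    intro x hx y hy hne
    obtain ⟨i, hi⟩ := exists_coord hn x y
    refine ⟨i, ?_⟩
    rw [Real.dist_eq] at hi
    rcases le_total (x i) (y i) with h | h
    · have : BRel A i x y := ⟨hx, hy, by rw [hi, abs_of_nonpos (by linarith)]; ring, hne⟩
      exact ne_of_lt (hstep i x y this)
    · have : BRel A i y x := ⟨hy, hx, by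
        rw [dist_comm, hi, abs_of_nonneg (by linarith)], hne.symm⟩
      exact (ne_of_lt (hstep i y x this)).symm
  set F : ↥A → (Fin n → Fin k) := fun a i => ⟨ht i a.1, htlt i a.1⟩ with hF
  have Finj : Function.Injective F := by
    intro a b hab
    by_contra hne
    have hne' : a.1 ≠ b.1 := fun h => hne (Subtype.ext h)
    obtain ⟨i, hi⟩ := key a.1 a.2 b.1 b.2 hne'
    have := congrFun hab i
    rw [hF] at this
    simp only [Fin.mk.injEq] at this
    exact hi this
  haveI : Finite ↥A := Finite.of_injective F Finj
  refine ⟨Set.finite_coe_iff.mp this, ?_⟩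
  have h1 : A.ncard = Nat.card ↥A := (Nat.card_coe_set_eq A).symm
  have h2 : Nat.card ↥A ≤ Nat.card (Fin n → Fin k) := Nat.card_le_card_of_injective F Finj
  rw [h1]
  simpa [Nat.card_eq_fintype_card] using h2
end
section
variable {n k : ℕ}

lemma card_S (hk : 0 < k) :
    {x : Fin n → ℝ | ∀ i, ∃ j : ℕ, 1 ≤ j ∧ j ≤ k ∧ x i = (j : ℝ)}.ncard = k ^ n := by
  classical
  set S := {x : Fin n → ℝ | ∀ i, ∃ j : ℕ, 1 ≤ j ∧ j ≤ k ∧ x i = (j : ℝ)} with hSdef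
  set G : (Fin n → Fin k) → ↥S := fun v =>
    ⟨fun i => (((v i : ℕ) + 1 : ℕ) : ℝ), fun i => ⟨(v i : ℕ) + 1, by omega,
      by have := (v i).2; omega, by push_cast; ring⟩⟩ with hG
  have hbij : Function.Bijective G := by
    constructor
    · intro v w hvw
      funext i
      have := congrFun (Subtype.ext_iff.mp hvw) i
      simp only [hG] at this
      have : (v i : ℕ) + 1 = (w i : ℕ) + 1 := Nat.cast_injective this
      exact Fin.ext (by omega)
    · rintro ⟨x, hx⟩
      have hx' : ∀ i, ∃ j : ℕ, 1 ≤ j ∧ j ≤ k ∧ x i = (j : ℝ) := hx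
      choose j h1 h2 h3 using hx'
      refine ⟨fun i => ⟨j i - 1, by have := h1 i; have := h2 i; omega⟩, ?_⟩
      apply Subtype.ext
      funext i
      show ((j i - 1 + 1 : ℕ) : ℝ) = x i
      rw [Nat.sub_add_cancel (h1 i), (h3 i)]
  have : Nat.card ↥S = Nat.card (Fin n → Fin k) :=
    (Nat.card_eq_of_bijective G hbij).symm
  rw [← Nat.card_coe_set_eq, this]
  simp [Nat.card_eq_fintype_card]

lemma no_baton_S (hk : 0 < k) (hn : 0 < n) (lam : ℕ → ℝ) (hpos : ∀ j < k, 0 < lam j) :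
    ¬ HasCopy (baton lam k)
      {x : Fin n → ℝ | ∀ i, ∃ j : ℕ, 1 ≤ j ∧ j ≤ k ∧ x i = (j : ℝ)} := by
  rintro ⟨f, hiso, himg⟩
  set S := {x : Fin n → ℝ | ∀ i, ∃ j : ℕ, 1 ≤ j ∧ j ≤ k ∧ x i = (j : ℝ)} with hSdef
  set σ : ℕ → ℝ := fun r => ∑ j ∈ Finset.range r, lam j with hσ
  have hmemB : ∀ r ≤ k, σ r ∈ baton lam k := fun r hr => ⟨r, Set.mem_Iic.mpr hr, rfl⟩
  set p : ℕ → (Fin n → ℝ) := fun r => f (σ r) with hp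
  have hpS : ∀ r ≤ k, p r ∈ S := fun r hr => himg ⟨σ r, hmemB r hr, rfl⟩
  have hσle : ∀ r r', r ≤ r' → r' ≤ k → σ r ≤ σ r' := by
    intro r r' h1 h2
    have hs : σ r' - σ r = ∑ j ∈ Finset.Ico r r', lam j := by
      rw [hσ]; simp only; rw [Finset.sum_Ico_eq_sub _ h1]
    have : 0 ≤ ∑ j ∈ Finset.Ico r r', lam j :=
      Finset.sum_nonneg fun j hj => le_of_lt (hpos j (by simp at hj; omega))
    linarith
  have d1 : ∀ r < k, dist (p r) (p (r+1)) = lam r := by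
    intro r hr
    rw [hp]
    simp only
    rw [hiso _ (hmemB r (le_of_lt hr)) _ (hmemB (r+1) hr), Real.dist_eq,
      abs_of_nonpos (by linarith [hσle r (r+1) (by omega) hr])]
    have : σ (r+1) = σ r + lam r := Finset.sum_range_succ _ _
    linarith
  have dk : dist (p 0) (p k) = σ k := by
    rw [hp]
    simp only
    rw [hiso _ (hmemB 0 (by omega)) _ (hmemB k le_rfl), Real.dist_eq,
      abs_of_nonpos (by linarith [hσle 0 k (by omega) le_rfl, (by simp [hσ] : σ 0 = (0:ℝ))])]
    have : σ 0 = 0 := by simp [hσ]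
    linarith
  obtain ⟨i, hi⟩ := exists_coord hn (p 0) (p k)
  -- coordinates are casts of naturals in [1,k]
  choose b hb1 hb2 hb3 using fun r (hr : r ≤ k) => hpS r hr i
  -- telescoping
  have htel : p k i - p 0 i = ∑ j ∈ Finset.range k, (p (j+1) i - p j i) :=
    (Finset.sum_range_sub (fun j => p j i) k).symm
  have hajle : ∀ j < k, |p (j+1) i - p j i| ≤ lam j := by
    intro j hj
    have := dist_le_pi_dist (p j) (p (j+1)) i
    rw [Real.dist_eq, d1 j hj, abs_sub_comm] at this
    exact this
  have habs : |p k i - p 0 i| = σ k := by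
    rw [Real.dist_eq, abs_sub_comm] at hi
    rw [← hi, dk]
  have hsum_le : σ k ≤ ∑ j ∈ Finset.range k, |p (j+1) i - p j i| := by
    rw [← habs, htel]
    exact Finset.abs_sum_le_sum_abs _ _
  have hsum_ge : ∑ j ∈ Finset.range k, |p (j+1) i - p j i| ≤ σ k := by
    rw [hσ]
    exact Finset.sum_le_sum fun j hj => hajle j (Finset.mem_range.mp hj)
  -- each |diff| equals lam j hence positive
  have heq : ∀ j ∈ Finset.range k, |p (j+1) i - p j i| = lam j := by
    have h0 : ∑ j ∈ Finset.range k, (lam j - |p (j+1) i - p j i|) = 0 := by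
      rw [Finset.sum_sub_distrib]
      have : ∑ j ∈ Finset.range k, lam j = σ k := rfl
      linarith
    intro j hj
    have := (Finset.sum_eq_zero_iff_of_nonneg (fun j hj =>
      sub_nonneg.mpr (hajle j (Finset.mem_range.mp hj)))).mp h0 j hj
    linarith [this]
  have hone : ∀ j ∈ Finset.range k, (1:ℝ) ≤ |p (j+1) i - p j i| := by
    intro j hj
    rw [Finset.mem_range] at hj
    have hpos' : 0 < |p (j+1) i - p j i| := by
      rw [heq j (Finset.mem_range.mpr hj)]; exact hpos j hj
    have e1 : p j i = (b j (le_of_lt hj) : ℝ) := hb3 j (le_of_lt hj)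
    have e2 : p (j+1) i = (b (j+1) hj : ℝ) := hb3 (j+1) hj
    rw [e1, e2]
    rw [e1, e2] at hpos'
    apply one_le_abs_nat_cast_sub
    intro hbb
    rw [hbb] at hpos'
    simp at hpos'
  have hk_le : (k : ℝ) ≤ σ k := by
    calc (k:ℝ) = ∑ _j ∈ Finset.range k, (1:ℝ) := by simp
      _ ≤ ∑ j ∈ Finset.range k, |p (j+1) i - p j i| := Finset.sum_le_sum hone
      _ ≤ σ k := hsum_ge
  -- but |p k i - p 0 i| ≤ k - 1
  have e0 : p 0 i = (b 0 (by omega) : ℝ) := hb3 0 (by omega)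
  have ek : p k i = (b k le_rfl : ℝ) := hb3 k le_rfl
  have hb01 : 1 ≤ b 0 (by omega : 0 ≤ k) := hb1 0 (by omega)
  have hb0k : b 0 (by omega : 0 ≤ k) ≤ k := hb2 0 (by omega)
  have hbk1 : 1 ≤ b k le_rfl := hb1 k le_rfl
  have hbkk : b k le_rfl ≤ k := hb2 k le_rfl
  have : |p k i - p 0 i| ≤ (k:ℝ) - 1 := by
    rw [e0, ek, abs_sub_le_iff]
    constructor <;>
    · push_cast
      have h1 : (1:ℝ) ≤ (b 0 (by omega : 0 ≤ k) : ℝ) := by exact_mod_cast hb01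
      have h2 : ((b 0 (by omega : 0 ≤ k)) : ℝ) ≤ k := by exact_mod_cast hb0k
      have h3 : (1:ℝ) ≤ (b k le_rfl : ℝ) := by exact_mod_cast hbk1
      have h4 : ((b k le_rfl) : ℝ) ≤ k := by exact_mod_cast hbkk
      linarith
  rw [habs] at this
  linarith
end

/-- If `A ⊆ ℝ^n` (max metric) contains no isometric copy of any `(k+1)`-point baton,
then `|A| ≤ k^n`; moreover this bound is tight, as witnessed by `{1,…,k}^n`. -/
theorem no_long_baton_card (k n : ℕ) (hk : 0 < k) (hn : 0 < n) :
    (∀ A : Set (Fin n → ℝ),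
      (∀ lam : ℕ → ℝ, (∀ j < k, 0 < lam j) → ¬ HasCopy (baton lam k) A) →
      A.Finite ∧ A.ncard ≤ k ^ n) ∧
    ({x : Fin n → ℝ | ∀ i, ∃ j : ℕ, 1 ≤ j ∧ j ≤ k ∧ x i = (j : ℝ)}.ncard = k ^ n ∧
      ∀ lam : ℕ → ℝ, (∀ j < k, 0 < lam j) →
        ¬ HasCopy (baton lam k)
            {x : Fin n → ℝ | ∀ i, ∃ j : ℕ, 1 ≤ j ∧ j ≤ k ∧ x i = (j : ℝ)}) := by
  refine ⟨fun A hA => part1 hk hn A hA, card_S hk, fun lam hp => no_baton_S hk hn lam hp⟩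
end

section
/- Let k ∈ ℕ, let λ_1, …, λ_k be positive integers, and set B = B(λ_1,…,λ_k). Then for all n ∈ ℕ, χ(ℝ^n_∞, B) ≥ d(ℤ, B)^{−n}. -/
open Set Filter

/-- The chromatic number of `ℝ^n` with the max-norm metric and forbidden subspace `M`. -/
noncomputable def chrom {α : Type*} [MetricSpace α] (M : Set α) (n : ℕ) : ℕ :=
  sInf {N : ℕ | ∃ c : (Fin n → ℝ) → Fin N, ∀ i : Fin N, ¬ HasCopy M {x | c x = i}}

/-- The integer baton `B(λ₁,…,λ_k)`: the set of partial sums `σ₀,…,σ_k`. -/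
def batonZ (lam : ℕ → ℤ) (k : ℕ) : Set ℤ :=
  (fun r => ∑ j ∈ Finset.range r, lam j) '' Set.Iic k

/-- `A ⊆ ℤ` is `S`-tr-free: it contains no translate of `S` and no translate of `-S`. -/
def TrFreeZ (S A : Set ℤ) : Prop :=
  ∀ x : ℤ, ¬ ((fun s => s + x) '' S ⊆ A) ∧ ¬ ((fun s => -s + x) '' S ⊆ A)

/-- The upper density of a set of integers. -/
noncomputable def upperDensity (A : Set ℤ) : ℝ :=
  Filter.limsup
    (fun N : ℕ => ((A ∩ Set.Icc (-(N : ℤ)) (N : ℤ)).ncard : ℝ) / (2 * N + 1)) Filter.atTop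

/-- `d(ℤ, S)`: the supremum of upper densities of `S`-tr-free subsets of `ℤ`. -/
noncomputable def densZ (S : Set ℤ) : ℝ :=
  sSup (upperDensity '' {A : Set ℤ | TrFreeZ S A})

namespace ChiBaton

variable (lam : ℕ → ℤ) (k : ℕ)

/-- partial sums -/
def sg (r : ℕ) : ℤ := ∑ j ∈ Finset.range r, lam j

lemma sg_zero : sg lam 0 = 0 := by simp [sg]

lemma mem_batonZ {z : ℤ} : z ∈ batonZ lam k ↔ ∃ r, r ≤ k ∧ sg lam r = z := by
  simp [batonZ, Set.mem_image, Set.mem_Iic, sg]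

section sigma
variable {lam k}

lemma sg_lt_sg (hlam : ∀ j < k, 0 < lam j) {a b : ℕ} (hab : a < b) (hb : b ≤ k) : sg lam a < sg lam b := by
  have h : sg lam b - sg lam a = ∑ j ∈ Finset.Ico a b, lam j := by
    rw [sg, sg, ← Finset.sum_Ico_eq_sub _ (le_of_lt hab)]
  have hpos : 0 < ∑ j ∈ Finset.Ico a b, lam j := by
    apply Finset.sum_pos
    · intro j hj
      exact hlam j (lt_of_lt_of_le (Finset.mem_Ico.mp hj).2 hb)
    · exact Finset.nonempty_Ico.mpr hab
  omega

lemma sg_nonneg (hlam : ∀ j < k, 0 < lam j) {r : ℕ} (hr : r ≤ k) : 0 ≤ sg lam r := by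
  rcases Nat.eq_zero_or_pos r with rfl | hpos
  · simp [sg_zero]
  · have := sg_lt_sg hlam hpos hr
    rw [sg_zero] at this; omega

lemma sg_le_s (hlam : ∀ j < k, 0 < lam j) {r : ℕ} (hr : r ≤ k) : sg lam r ≤ sg lam k := by
  rcases eq_or_lt_of_le hr with rfl | h
  · exact le_rfl
  · exact le_of_lt (sg_lt_sg hlam h le_rfl)

lemma s_pos (hlam : ∀ j < k, 0 < lam j) (hk : 0 < k) : 0 < sg lam k := by
  have := sg_lt_sg hlam hk le_rfl
  rwa [sg_zero] at this

lemma sg_inj (hlam : ∀ j < k, 0 < lam j) {a b : ℕ} (ha : a ≤ k) (hb : b ≤ k) (h : sg lam a = sg lam b) : a = b := by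
  rcases lt_trichotomy a b with hl | he | hl
  · exact absurd h (ne_of_lt (sg_lt_sg hlam hl hb))
  · exact he
  · exact absurd h.symm (ne_of_lt (sg_lt_sg hlam hl ha))

end sigma

section trfree
variable {lam k}

lemma trfree_false {A : Set ℤ} (hA : TrFreeZ (batonZ lam k) A) {x ε : ℤ}
    (hε : ε = 1 ∨ ε = -1) (h : ∀ r ≤ k, x + ε * sg lam r ∈ A) : False := by
  rcases hε with rfl | rfl
  · refine (hA x).1 ?_
    rintro _ ⟨z, hz, rfl⟩
    obtain ⟨r, hr, rfl⟩ := (mem_batonZ lam k).mp hz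
    show sg lam r + x ∈ A
    have e : sg lam r + x = x + 1 * sg lam r := by ring
    rw [e]; exact h r hr
  · refine (hA x).2 ?_
    rintro _ ⟨z, hz, rfl⟩
    obtain ⟨r, hr, rfl⟩ := (mem_batonZ lam k).mp hz
    show -sg lam r + x ∈ A
    have e : -sg lam r + x = x + -1 * sg lam r := by ring
    rw [e]; exact h r hr

lemma trfree_of_forall {A : Set ℤ}
    (h : ∀ x : ℤ, ∀ ε : ℤ, ε = 1 ∨ ε = -1 → ∃ r ≤ k, x + ε * sg lam r ∉ A) :
    TrFreeZ (batonZ lam k) A := by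
  intro x
  constructor
  · intro hsub
    obtain ⟨r, hr, hmem⟩ := h x 1 (Or.inl rfl)
    exact hmem (by simpa [add_comm] using hsub ⟨sg lam r, (mem_batonZ lam k).mpr ⟨r, hr, rfl⟩, rfl⟩)
  · intro hsub
    obtain ⟨r, hr, hmem⟩ := h x (-1) (Or.inr rfl)
    refine hmem ?_
    have e : x + -1 * sg lam r = -sg lam r + x := by ring
    rw [e]
    exact hsub ⟨sg lam r, (mem_batonZ lam k).mpr ⟨r, hr, rfl⟩, rfl⟩

end trfree

/-- the maximum size of a tr-free subset of the integer window `[0, L)` -/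
noncomputable def t1 (L : ℕ) : ℕ :=
  letI := Classical.dec
  (((Finset.Ico (0:ℤ) (L:ℤ)).powerset).filter
    (fun F : Finset ℤ => TrFreeZ (batonZ lam k) (F : Set ℤ))).sup Finset.card

section t1sec
variable {lam k}

lemma card_le_t1 {L : ℕ} {F : Finset ℤ} (hF : F ⊆ Finset.Ico (0:ℤ) (L:ℤ))
    (hfree : TrFreeZ (batonZ lam k) (↑F : Set ℤ)) : F.card ≤ t1 lam k L := by
  classical
  exact Finset.le_sup (f := Finset.card)
    (Finset.mem_filter.mpr ⟨Finset.mem_powerset.mpr hF, hfree⟩)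

lemma trfree_empty : TrFreeZ (batonZ lam k) (↑(∅ : Finset ℤ) : Set ℤ) := by
  apply trfree_of_forall
  intro x ε hε
  exact ⟨0, Nat.zero_le k, by simp⟩

lemma exists_t1_max (L : ℕ) :
    ∃ F : Finset ℤ, F ⊆ Finset.Ico (0:ℤ) (L:ℤ) ∧ TrFreeZ (batonZ lam k) (↑F : Set ℤ) ∧
      F.card = t1 lam k L := by
  classical
  have hne : (((Finset.Ico (0:ℤ) (L:ℤ)).powerset).filter
      (fun F : Finset ℤ => TrFreeZ (batonZ lam k) (F : Set ℤ))).Nonempty :=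
    ⟨∅, Finset.mem_filter.mpr ⟨Finset.mem_powerset.mpr (Finset.empty_subset _), trfree_empty⟩⟩
  obtain ⟨F, hmem, hcard⟩ := Finset.exists_mem_eq_sup _ hne Finset.card
  rw [Finset.mem_filter, Finset.mem_powerset] at hmem
  refine ⟨F, hmem.1, hmem.2, ?_⟩
  rw [t1]; exact hcard.symm

lemma t1_pos (hlam : ∀ j < k, 0 < lam j) (hk : 0 < k) {L : ℕ} (hL : 1 ≤ L) :
    1 ≤ t1 lam k L := by
  have h0 : ({(0:ℤ)} : Finset ℤ) ⊆ Finset.Ico (0:ℤ) (L:ℤ) := by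
    intro z hz
    simp only [Finset.mem_singleton] at hz
    subst hz
    simp only [Finset.mem_Ico, le_refl, true_and]
    exact_mod_cast hL
  have hfree : TrFreeZ (batonZ lam k) (↑({(0:ℤ)} : Finset ℤ) : Set ℤ) := by
    apply trfree_of_forall
    intro x ε hε
    by_cases hx : x = 0
    · refine ⟨k, le_rfl, ?_⟩
      subst hx
      simp only [Finset.coe_singleton, Set.mem_singleton_iff, zero_add]
      intro h
      have hs := s_pos hlam hk
      rcases hε with rfl | rfl <;> omega
    · exact ⟨0, Nat.zero_le k, by simpa [sg_zero] using hx⟩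
  calc 1 = ({(0:ℤ)} : Finset ℤ).card := by simp
    _ ≤ t1 lam k L := card_le_t1 h0 hfree

end t1sec

section density
variable {lam : ℕ → ℤ} {k : ℕ}

/-- the density ratio sequence -/
noncomputable def rat (A : Set ℤ) (N : ℕ) : ℝ :=
  ((A ∩ Set.Icc (-(N : ℤ)) (N : ℤ)).ncard : ℝ) / (2 * N + 1)

lemma upperDensity_eq (A : Set ℤ) : upperDensity A = Filter.limsup (rat A) Filter.atTop := rfl

lemma rat_nonneg (A : Set ℤ) (N : ℕ) : 0 ≤ rat A N := by
  apply div_nonneg (by positivity) (by positivity)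

lemma rat_le_one (A : Set ℤ) (N : ℕ) : rat A N ≤ 1 := by
  rw [rat, div_le_one (by positivity)]
  have h1 : (A ∩ Set.Icc (-(N : ℤ)) (N : ℤ)).ncard ≤ (Set.Icc (-(N : ℤ)) (N : ℤ)).ncard :=
    Set.ncard_le_ncard Set.inter_subset_right (Set.finite_Icc _ _)
  have h2 : (Set.Icc (-(N : ℤ)) (N : ℤ)).ncard = 2 * N + 1 := by
    rw [← Finset.coe_Icc, Set.ncard_coe_finset, Int.card_Icc]
    omega
  calc ((A ∩ Set.Icc (-(N : ℤ)) (N : ℤ)).ncard : ℝ) ≤ ((2 * N + 1 : ℕ) : ℝ) := by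
        exact_mod_cast h2 ▸ h1
    _ = 2 * N + 1 := by push_cast; ring

lemma isBounded_rat (A : Set ℤ) : Filter.IsBoundedUnder (· ≤ ·) Filter.atTop (rat A) :=
  Filter.isBoundedUnder_of ⟨1, fun N => rat_le_one A N⟩

lemma isCobounded_rat (A : Set ℤ) : Filter.IsCoboundedUnder (· ≤ ·) Filter.atTop (rat A) := by
  have h : Filter.IsBoundedUnder (· ≥ ·) Filter.atTop (rat A) :=
    Filter.isBoundedUnder_of ⟨0, fun N => rat_nonneg A N⟩
  exact h.isCobounded_flip

lemma upperDensity_le_one (A : Set ℤ) : upperDensity A ≤ 1 :=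
  Filter.limsup_le_of_le (isCobounded_rat A) (Filter.Eventually.of_forall (rat_le_one A))

lemma upperDensity_nonneg (A : Set ℤ) : 0 ≤ upperDensity A :=
  Filter.le_limsup_of_frequently_le
    (Filter.Frequently.of_forall (rat_nonneg A)) (isBounded_rat A)

lemma bddAbove_ud (S : Set ℤ) : BddAbove (upperDensity '' {A : Set ℤ | TrFreeZ S A}) := by
  refine ⟨1, ?_⟩
  rintro _ ⟨A, -, rfl⟩
  exact upperDensity_le_one A

lemma le_densZ_of_trfree {S A : Set ℤ} (h : TrFreeZ S A) : upperDensity A ≤ densZ S :=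
  le_csSup (bddAbove_ud S) ⟨A, h, rfl⟩

end density
section construction
variable {lam : ℕ → ℤ} {k : ℕ}

lemma densZ_ge (hlam : ∀ j < k, 0 < lam j) (hk : 0 < k) (L : ℕ) (hL : 1 ≤ L) :
    (t1 lam k L : ℝ) / ((L : ℝ) + ((sg lam k).toNat : ℝ)) ≤ densZ (batonZ lam k) := by
  obtain ⟨F, hFsub, hFfree, hFcard⟩ := exists_t1_max (lam := lam) (k := k) L
  have hspos : 0 < sg lam k := s_pos hlam hk
  set s : ℤ := sg lam k with hs
  set PN : ℕ := L + s.toNat with hPN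
  have hPNpos : 0 < PN := by omega
  set P : ℤ := (L : ℤ) + s with hP
  have hPZ : ((PN : ℕ) : ℤ) = P := by
    rw [hPN, hP]; push_cast [Int.toNat_of_nonneg hspos.le]; ring
  have hPpos : 0 < P := by positivity
  have hLP : (L : ℤ) ≤ P := by omega
  set Aset : Set ℤ := {z : ℤ | z % P ∈ (F : Set ℤ)} with hA
  have hbound : ∀ y ∈ (F : Set ℤ), 0 ≤ y ∧ y < (L : ℤ) := by
    intro y hy
    have := hFsub hy
    simpa [Finset.mem_Ico] using this
  -- tr-freeness of the periodic set
  have hAfree : TrFreeZ (batonZ lam k) Aset := by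
    apply trfree_of_forall
    intro x ε hε
    by_contra hcon
    push_neg at hcon
    rcases hε with rfl | rfl
    · have hx : x % P ∈ (F : Set ℤ) := by
        have := hcon 0 (Nat.zero_le k)
        simpa [hA, sg_zero] using this
      have hx0b : 0 ≤ x % P ∧ x % P < (L : ℤ) := hbound _ hx
      have key : ∀ r ≤ k, x % P + 1 * sg lam r ∈ (F : Set ℤ) := by
        intro r hr
        have hsr0 : 0 ≤ sg lam r := sg_nonneg hlam hr
        have hsrs : sg lam r ≤ s := sg_le_s hlam hr
        have e4 : sg lam r % P = sg lam r := Int.emod_eq_of_lt hsr0 (by omega)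
        have e5 : (x % P + sg lam r) % P = x % P + sg lam r :=
          Int.emod_eq_of_lt (by omega) (by omega)
        have h1 : (x + 1 * sg lam r) % P = x % P + sg lam r := by
          rw [one_mul, Int.add_emod, e4, e5]
        have h2 := hcon r hr
        rw [hA, Set.mem_setOf_eq, h1] at h2
        rwa [one_mul]
      exact trfree_false hFfree (Or.inl rfl) key
    · have hxk : (x - s) % P ∈ (F : Set ℤ) := by
        have h2 := hcon k le_rfl
        rw [hA, Set.mem_setOf_eq] at h2
        have e : x + -1 * sg lam k = x - s := by rw [← hs]; ring
        rwa [e] at h2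
      have hx1b : 0 ≤ (x - s) % P ∧ (x - s) % P < (L : ℤ) := hbound _ hxk
      have key : ∀ r ≤ k, ((x - s) % P + s) + -1 * sg lam r ∈ (F : Set ℤ) := by
        intro r hr
        have hsr0 : 0 ≤ sg lam r := sg_nonneg hlam hr
        have hsrs : sg lam r ≤ s := sg_le_s hlam hr
        have e2 : x + -1 * sg lam r = (x - s) + (s - sg lam r) := by ring
        have e4 : (s - sg lam r) % P = s - sg lam r := Int.emod_eq_of_lt (by omega) (by omega)
        have e5 : ((x - s) % P + (s - sg lam r)) % P = (x - s) % P + (s - sg lam r) :=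
          Int.emod_eq_of_lt (by omega) (by omega)
        have h1 : ((x - s) + (s - sg lam r)) % P = (x - s) % P + (s - sg lam r) := by
          rw [Int.add_emod, e4, e5]
        have h2 := hcon r hr
        rw [hA, Set.mem_setOf_eq, e2, h1] at h2
        have e3 : ((x - s) % P + s) + -1 * sg lam r = (x - s) % P + (s - sg lam r) := by ring
        rwa [e3]
      exact trfree_false hFfree (Or.inr rfl) key
  -- counting lower bound for the density ratio
  have hcount : ∀ N : ℕ, L ≤ N →
      (((2 * ((N - L) / PN) + 1) * t1 lam k L : ℕ) : ℝ) / (2 * N + 1) ≤ rat Aset N := by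
    intro N hLN
    set Q : ℕ := (N - L) / PN with hQ
    set G : Finset (ℤ × ℤ) := (Finset.Icc (-(Q : ℤ)) (Q : ℤ)) ×ˢ F with hG
    have hmemG : ∀ p : ℤ × ℤ, p ∈ G → (-(Q:ℤ) ≤ p.1 ∧ p.1 ≤ (Q:ℤ)) ∧ p.2 ∈ (F : Set ℤ) := by
      intro p hp
      rw [hG, Finset.mem_product, Finset.mem_Icc] at hp
      exact ⟨hp.1, hp.2⟩
    have hmodPy : ∀ y ∈ (F : Set ℤ), ∀ q : ℤ, (q * P + y) % P = y := by
      intro y hy q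
      obtain ⟨hy0, hyL⟩ := hbound y hy
      have e : q * P + y = y + P * q := by ring
      rw [e, Int.add_mul_emod_self_left, Int.emod_eq_of_lt hy0 (by omega)]
    have hinj : Set.InjOn (fun p : ℤ × ℤ => p.1 * P + p.2) ↑G := by
      rintro ⟨q, y⟩ hqy ⟨q', y'⟩ hqy' heq
      simp only [Finset.mem_coe] at hqy hqy'
      have h1 := hmemG _ hqy
      have h2 := hmemG _ hqy'
      simp only at heq
      have hyy : y = y' := by
        have e1 : (q * P + y) % P = y := hmodPy y h1.2 q
        have e2 : (q' * P + y') % P = y' := hmodPy y' h2.2 q'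
        rw [heq, e2] at e1
        exact e1.symm
      subst hyy
      have hq : q = q' := by
        have : q * P = q' * P := by omega
        exact mul_right_cancel₀ (ne_of_gt hPpos) this
      simp [hq]
    have hQP : (Q : ℤ) * P ≤ (N : ℤ) - L := by
      have h := Nat.div_mul_le_self (N - L) PN
      have : ((Q * PN : ℕ) : ℤ) ≤ (((N - L) : ℕ) : ℤ) := by exact_mod_cast Nat.div_mul_le_self (N-L) PN
      rwa [Nat.cast_sub hLN, Nat.cast_mul, hPZ] at this
    have hsub2 : (fun p : ℤ × ℤ => p.1 * P + p.2) '' ↑G ⊆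
        Aset ∩ Set.Icc (-(N : ℤ)) (N : ℤ) := by
      rintro _ ⟨⟨q, y⟩, hqy, rfl⟩
      simp only [Finset.mem_coe] at hqy
      obtain ⟨⟨hq1, hq2⟩, hyF⟩ := hmemG _ hqy
      obtain ⟨hy0, hyL⟩ := hbound y hyF
      constructor
      · show (q * P + y) % P ∈ (F : Set ℤ)
        rw [hmodPy y hyF q]; exact hyF
      · have h3 : -(Q : ℤ) * P ≤ q * P := mul_le_mul_of_nonneg_right hq1 hPpos.le
        have h4 : q * P ≤ (Q : ℤ) * P := mul_le_mul_of_nonneg_right hq2 hPpos.le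
        simp only [Set.mem_Icc]
        constructor <;> nlinarith [hQP, hy0, hyL]
    have hfin : (Aset ∩ Set.Icc (-(N : ℤ)) (N : ℤ)).Finite :=
      Set.Finite.inter_of_right (Set.finite_Icc _ _) _
    have hge : ((2 * Q + 1) * t1 lam k L : ℕ) ≤ (Aset ∩ Set.Icc (-(N : ℤ)) (N : ℤ)).ncard := by
      have e1 : ((fun p : ℤ × ℤ => p.1 * P + p.2) '' ↑G).ncard = G.card := by
        rw [Set.ncard_image_of_injOn hinj, Set.ncard_coe_finset]
      have e2 : G.card = (2 * Q + 1) * t1 lam k L := by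
        rw [hG, Finset.card_product, hFcard]
        congr 1
        rw [Int.card_Icc]
        omega
      calc ((2 * Q + 1) * t1 lam k L : ℕ) = ((fun p : ℤ × ℤ => p.1 * P + p.2) '' ↑G).ncard := by
            rw [e1, e2]
        _ ≤ (Aset ∩ Set.Icc (-(N : ℤ)) (N : ℤ)).ncard := Set.ncard_le_ncard hsub2 hfin
    rw [rat]
    have hge' : (((2 * ((N - L) / PN) + 1) * t1 lam k L : ℕ) : ℝ)
        ≤ ((Aset ∩ Set.Icc (-(N : ℤ)) (N : ℤ)).ncard : ℝ) := by exact_mod_cast hge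
    have hden : (0:ℝ) < 2 * (N:ℝ) + 1 := by positivity
    exact (div_le_div_iff_of_pos_right hden).mpr hge'
  -- the limit of the lower-bound sequence
  set T1R : ℝ := (t1 lam k L : ℝ) with hT1R
  have hPNR : (0 : ℝ) < (PN : ℝ) := by exact_mod_cast hPNpos
  have htendsto : Filter.Tendsto
      (fun j : ℕ => ((2 * (j : ℝ) + 1) * T1R) / (2 * ((L : ℝ) + (j : ℝ) * (PN : ℝ)) + 1))
      Filter.atTop (nhds (T1R / (PN : ℝ))) := by
    have h0 : Filter.Tendsto (fun j : ℕ => ((j : ℝ))⁻¹) Filter.atTop (nhds 0) :=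
      tendsto_inv_atTop_zero.comp tendsto_natCast_atTop_atTop
    have hnum : Filter.Tendsto (fun u : ℝ => (2 + u) * T1R) (nhds 0) (nhds ((2 + 0) * T1R)) := by
      exact (Filter.Tendsto.add tendsto_const_nhds tendsto_id).mul tendsto_const_nhds
    have hden : Filter.Tendsto (fun u : ℝ => 2 * (PN : ℝ) + (L : ℝ) * (2 * u) + u) (nhds 0)
        (nhds (2 * (PN : ℝ) + (L : ℝ) * (2 * 0) + 0)) := by
      exact ((tendsto_const_nhds.add (tendsto_const_nhds.mul
        (tendsto_const_nhds.mul tendsto_id))).add tendsto_id)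
    have hdne : (2 * (PN : ℝ) + (L : ℝ) * (2 * 0) + 0) ≠ 0 := by positivity
    have hcont := Filter.Tendsto.div hnum hden hdne
    have hccomp := hcont.comp h0
    have heq : ((2 + 0) * T1R) / (2 * (PN : ℝ) + (L : ℝ) * (2 * 0) + 0) = T1R / (PN : ℝ) := by
      rw [mul_zero, mul_zero, add_zero, add_zero, add_zero]
      rw [mul_comm 2 (PN : ℝ)]
      rw [mul_comm 2 T1R]
      exact mul_div_mul_right T1R (PN:ℝ) two_ne_zero
    rw [heq] at hccomp
    apply hccomp.congr'
    filter_upwards [Filter.eventually_ge_atTop 1] with j hj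
    have hjR : (0 : ℝ) < (j : ℝ) := by exact_mod_cast hj
    show ((2 + ((j:ℝ))⁻¹) * T1R) / (2 * (PN : ℝ) + (L : ℝ) * (2 * ((j:ℝ))⁻¹) + ((j:ℝ))⁻¹)
        = ((2 * (j : ℝ) + 1) * T1R) / (2 * ((L : ℝ) + (j : ℝ) * (PN : ℝ)) + 1)
    have hj0 : (j : ℝ) ≠ 0 := ne_of_gt hjR
    rw [div_eq_div_iff (by positivity) (by positivity)]
    field_simp
    try ring
    try exact Or.inl trivial
    try (ring_nf; exact Or.inl trivial)
  -- every c below the limit is at most the upper density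
  have key : ∀ c : ℝ, c < T1R / (PN : ℝ) → c ≤ upperDensity Aset := by
    intro c hc
    rw [upperDensity_eq]
    apply Filter.le_limsup_of_frequently_le _ (isBounded_rat Aset)
    rw [Filter.frequently_atTop]
    intro a
    obtain ⟨j, hj1, hj2⟩ :=
      ((htendsto.eventually (lt_mem_nhds hc)).and (Filter.eventually_ge_atTop a)).exists
    refine ⟨L + j * PN, ?_, ?_⟩
    · have : j ≤ j * PN := Nat.le_mul_of_pos_right j hPNpos
      omega
    · have h1 := hcount (L + j * PN) (Nat.le_add_right _ _)
      have hQeq : (L + j * PN - L) / PN = j := by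
        rw [Nat.add_sub_cancel_left]
        exact Nat.mul_div_cancel j hPNpos
      rw [hQeq] at h1
      have hcast : (((2 * j + 1) * t1 lam k L : ℕ) : ℝ) / (2 * ((L + j * PN : ℕ) : ℝ) + 1)
          = ((2 * (j : ℝ) + 1) * T1R) / (2 * ((L : ℝ) + (j : ℝ) * (PN : ℝ)) + 1) := by
        simp only [hT1R]
        try push_cast
        try ring
      rw [hcast] at h1
      exact le_trans hj1.le h1
  -- conclude
  have hgoal : T1R / (PN : ℝ) ≤ densZ (batonZ lam k) := by
    by_contra hlt
    push_neg at hlt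
    obtain ⟨c, hc1, hc2⟩ := exists_between hlt
    have h3 := le_trans (key c hc2) (le_densZ_of_trfree hAfree)
    exact absurd h3 (not_le.mpr hc1)
  have : ((L : ℝ) + ((sg lam k).toNat : ℝ)) = (PN : ℝ) := by
    rw [hPN]; push_cast; ring
  rw [this]
  exact hgoal

end construction
section box
variable {lam : ℕ → ℤ} {k : ℕ} {n : ℕ}

/-- embedding of integer points into `ℝ^n` -/
def X (p : Fin n → ℤ) : Fin n → ℝ := fun j => (p j : ℝ)

/-- the `j`-th Lipschitz cone order -/
def ltc (j : Fin n) (p q : Fin n → ℤ) : Prop :=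
  p j < q j ∧ ∀ i, |p i - q i| ≤ q j - p j

lemma ltc_trans {j : Fin n} {p q r : Fin n → ℤ} (h1 : ltc j p q) (h2 : ltc j q r) :
    ltc j p r := by
  refine ⟨lt_trans h1.1 h2.1, fun i => ?_⟩
  have ha := abs_sub_le (p i) (q i) (r i)
  have hb := h1.2 i
  have hc := h2.2 i
  omega

lemma ltc_comparable (hn : 0 < n) {p q : Fin n → ℤ} (hne : p ≠ q) :
    ∃ j, ltc j p q ∨ ltc j q p := by
  have hne' : (Finset.univ : Finset (Fin n)).Nonempty := by
    refine ⟨⟨0, hn⟩, Finset.mem_univ _⟩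
  obtain ⟨j, -, hj⟩ :=
    Finset.exists_mem_eq_sup Finset.univ hne' (fun i : Fin n => (p i - q i).natAbs)
  have hmax : ∀ i, (p i - q i).natAbs ≤ (p j - q j).natAbs := by
    intro i
    rw [← hj]
    exact Finset.le_sup (f := fun i : Fin n => (p i - q i).natAbs) (Finset.mem_univ i)
  have hj0 : p j ≠ q j := by
    intro h
    apply hne
    funext i
    have := hmax i
    rw [h, sub_self, Int.natAbs_zero, Nat.le_zero] at this
    have := Int.natAbs_eq_zero.mp this
    omega
  have habs : ∀ i, |p i - q i| ≤ |p j - q j| := by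
    intro i
    rw [Int.abs_eq_natAbs, Int.abs_eq_natAbs]
    exact_mod_cast hmax i
  rcases lt_or_gt_of_ne hj0 with h | h
  · refine ⟨j, Or.inl ⟨h, fun i => ?_⟩⟩
    have h1 := habs i
    have h2 : |p j - q j| = q j - p j := by
      rw [abs_of_neg (by omega : p j - q j < 0)]; ring
    omega
  · refine ⟨j, Or.inr ⟨h, fun i => ?_⟩⟩
    have h1 := habs i
    have h2 : |p j - q j| = p j - q j := abs_of_pos (by omega)
    have h3 : |q i - p i| = |p i - q i| := abs_sub_comm _ _
    omega

lemma dist_X_eq {p q : Fin n → ℤ} (j : Fin n) (hmax : ∀ i, |p i - q i| ≤ |p j - q j|) :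
    dist (X p) (X q) = |((p j : ℝ)) - (q j : ℝ)| := by
  apply le_antisymm
  · rw [dist_pi_le_iff (abs_nonneg _)]
    intro i
    rw [X, X, Real.dist_eq]
    have h1 : |(p i : ℝ) - (q i : ℝ)| = ((|p i - q i| : ℤ) : ℝ) := by
      push_cast
      rfl
    have h2 : |(p j : ℝ) - (q j : ℝ)| = ((|p j - q j| : ℤ) : ℝ) := by
      push_cast
      rfl
    rw [h1, h2]
    exact_mod_cast hmax i
  · have h := dist_le_pi_dist (X p) (X q) j
    have h2 : dist (X p j) (X q j) = |(p j : ℝ) - (q j : ℝ)| := Real.dist_eq _ _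
    rw [← h2]
    exact h

lemma mem_M_iff {u : ℝ} :
    u ∈ ((fun z : ℤ => (z : ℝ)) '' batonZ lam k) ↔ ∃ a, a ≤ k ∧ ((sg lam a : ℤ) : ℝ) = u := by
  constructor
  · rintro ⟨z, hz, rfl⟩
    obtain ⟨a, ha, rfl⟩ := (mem_batonZ lam k).mp hz
    exact ⟨a, ha, rfl⟩
  · rintro ⟨a, ha, rfl⟩
    exact ⟨sg lam a, (mem_batonZ lam k).mpr ⟨a, ha, rfl⟩, rfl⟩

/-- a `j`-chain of points of `A` in the window has at most `t1` elements -/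
lemma chain_card_le (hlam : ∀ j < k, 0 < lam j) {A : Set (Fin n → ℝ)}
    (hA : ¬ HasCopy ((fun z : ℤ => (z : ℝ)) '' batonZ lam k) A)
    {L : ℕ} {C : Finset (Fin n → ℤ)}
    (hC1 : ∀ p ∈ C, ∀ j, 0 ≤ p j ∧ p j < (L : ℤ))
    (hC2 : ∀ p ∈ C, X p ∈ A)
    (j : Fin n)
    (hchain : ∀ p ∈ C, ∀ q ∈ C, p ≠ q → ltc j p q ∨ ltc j q p) :
    C.card ≤ t1 lam k L := by
  classical
  set T : Finset ℤ := C.image (fun p => p j) with hT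
  have hinj : Set.InjOn (fun p : Fin n → ℤ => p j) ↑C := by
    intro p hp q hq heq
    by_contra hne
    rcases hchain p hp q hq hne with h | h
    · exact absurd heq (ne_of_lt h.1)
    · exact absurd heq.symm (ne_of_lt h.1)
  have hcardT : T.card = C.card := Finset.card_image_of_injOn hinj
  have hTsub : T ⊆ Finset.Ico (0 : ℤ) (L : ℤ) := by
    intro z hz
    rw [hT, Finset.mem_image] at hz
    obtain ⟨p, hp, rfl⟩ := hz
    rw [Finset.mem_Ico]
    exact hC1 p hp j
  have hTfree : TrFreeZ (batonZ lam k) (↑T : Set ℤ) := by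
    apply trfree_of_forall
    intro x ε hε
    by_contra hcon
    push_neg at hcon
    have hpt : ∀ r, r ≤ k → ∃ p ∈ C, p j = x + ε * sg lam r := by
      intro r hr
      have h2 := hcon r hr
      rw [Finset.mem_coe, hT, Finset.mem_image] at h2
      obtain ⟨p, hp, he⟩ := h2
      exact ⟨p, hp, he⟩
    choose pt hptC hptj using hpt
    -- the key distance computation
    have hdist : ∀ (a b : ℕ) (ha : a ≤ k) (hb : b ≤ k),
        dist (X (pt a ha)) (X (pt b hb)) = |((sg lam a : ℤ) : ℝ) - ((sg lam b : ℤ) : ℝ)| := by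
      intro a b ha hb
      by_cases hpq : pt a ha = pt b hb
      · have hjj : (pt a ha) j = (pt b hb) j := by rw [hpq]
        rw [hptj a ha, hptj b hb] at hjj
        have hsg : sg lam a = sg lam b := by
          rcases hε with rfl | rfl <;> omega
        rw [hpq, hsg]
        simp [dist_self]
      · have hj1 : (pt a ha) j - (pt b hb) j = ε * (sg lam a - sg lam b) := by
          rw [hptj a ha, hptj b hb]; ring
        have hjabs : |(pt a ha) j - (pt b hb) j| = |sg lam a - sg lam b| := by
          rw [hj1, abs_mul]
          rcases hε with rfl | rfl <;> simp
        have hmax : ∀ i, |(pt a ha) i - (pt b hb) i| ≤ |(pt a ha) j - (pt b hb) j| := by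
          intro i
          rcases hchain _ (hptC a ha) _ (hptC b hb) hpq with h | h
          · have h2 := h.2 i
            have h0 := h.1
            have h5 : |(pt a ha) j - (pt b hb) j| = (pt b hb) j - (pt a ha) j := by
              rw [abs_of_neg (by omega : (pt a ha) j - (pt b hb) j < 0)]; ring
            omega
          · have h2 := h.2 i
            have h0 := h.1
            have h5 : |(pt a ha) j - (pt b hb) j| = (pt a ha) j - (pt b hb) j :=
              abs_of_pos (by omega)
            have h4 := abs_sub_comm ((pt a ha) i) ((pt b hb) i)
            omega
        have := dist_X_eq j hmax
        rw [this]
        have hcast : |((pt a ha) j : ℝ) - ((pt b hb) j : ℝ)|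
            = ((|(pt a ha) j - (pt b hb) j| : ℤ) : ℝ) := by push_cast; rfl
        rw [hcast, hjabs]
        push_cast
        rfl
    -- build the forbidden copy
    set f : ℝ → (Fin n → ℝ) := fun t =>
      if h : ∃ r, r ≤ k ∧ ((sg lam r : ℤ) : ℝ) = t then X (pt h.choose h.choose_spec.1)
      else X (pt 0 (Nat.zero_le k)) with hf
    apply hA
    refine ⟨f, ?_, ?_⟩
    · intro u hu v hv
      obtain ⟨a, ha, hua⟩ := (mem_M_iff (lam := lam) (k := k)).mp hu
      obtain ⟨b, hb, hvb⟩ := (mem_M_iff (lam := lam) (k := k)).mp hv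
      have hu' : ∃ r, r ≤ k ∧ ((sg lam r : ℤ) : ℝ) = u := ⟨a, ha, hua⟩
      have hv' : ∃ r, r ≤ k ∧ ((sg lam r : ℤ) : ℝ) = v := ⟨b, hb, hvb⟩
      rw [hf]
      simp only [dif_pos hu', dif_pos hv']
      rw [hdist _ _ hu'.choose_spec.1 hv'.choose_spec.1]
      rw [hu'.choose_spec.2, hv'.choose_spec.2, Real.dist_eq]
    · rintro _ ⟨u, hu, rfl⟩
      have hu' : ∃ r, r ≤ k ∧ ((sg lam r : ℤ) : ℝ) = u :=
        (mem_M_iff (lam := lam) (k := k)).mp hu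
      rw [hf]
      simp only [dif_pos hu']
      exact hC2 _ (hptC _ _)
  calc C.card = T.card := hcardT.symm
    _ ≤ t1 lam k L := card_le_t1 hTsub hTfree

end box
section heights
variable {lam : ℕ → ℤ} {k : ℕ} {n : ℕ}

/-- predicate: `C` is a `j`-chain inside `D` with top element `p` -/
def ChainEnd (D : Finset (Fin n → ℤ)) (j : Fin n) (C : Finset (Fin n → ℤ))
    (p : Fin n → ℤ) : Prop :=
  C ⊆ D ∧ p ∈ C ∧ (∀ r ∈ C, r = p ∨ ltc j r p) ∧
    ∀ r ∈ C, ∀ r' ∈ C, r ≠ r' → (ltc j r r' ∨ ltc j r' r)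

/-- height of `p`: size of the longest `j`-chain in `D` ending at `p` -/
noncomputable def ht (D : Finset (Fin n → ℤ)) (j : Fin n) (p : Fin n → ℤ) : ℕ :=
  letI := Classical.dec
  (D.powerset.filter (fun C => ChainEnd D j C p)).sup Finset.card

lemma singleton_chainEnd {D : Finset (Fin n → ℤ)} {p : Fin n → ℤ} (hp : p ∈ D) (j : Fin n) :
    ChainEnd D j {p} p := by
  refine ⟨Finset.singleton_subset_iff.mpr hp, Finset.mem_singleton_self p, ?_, ?_⟩
  · intro r hr
    exact Or.inl (Finset.mem_singleton.mp hr)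
  · intro r hr r' hr' hne
    rw [Finset.mem_singleton.mp hr, Finset.mem_singleton.mp hr'] at hne
    exact absurd rfl hne

lemma ht_one_le {D : Finset (Fin n → ℤ)} {p : Fin n → ℤ} (hp : p ∈ D) (j : Fin n) :
    1 ≤ ht D j p := by
  classical
  have hmem : ({p} : Finset (Fin n → ℤ)) ∈
      D.powerset.filter (fun C => ChainEnd D j C p) := by
    rw [Finset.mem_filter, Finset.mem_powerset]
    exact ⟨Finset.singleton_subset_iff.mpr hp, singleton_chainEnd hp j⟩
  calc 1 = ({p} : Finset (Fin n → ℤ)).card := by simp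
    _ ≤ ht D j p := by
        rw [ht]
        convert Finset.le_sup (f := Finset.card) hmem using 2
  
lemma exists_ht_chain {D : Finset (Fin n → ℤ)} {p : Fin n → ℤ} (hp : p ∈ D) (j : Fin n) :
    ∃ C, ChainEnd D j C p ∧ C.card = ht D j p := by
  classical
  have hne : (D.powerset.filter (fun C => ChainEnd D j C p)).Nonempty := by
    refine ⟨{p}, ?_⟩
    rw [Finset.mem_filter, Finset.mem_powerset]
    exact ⟨Finset.singleton_subset_iff.mpr hp, singleton_chainEnd hp j⟩
  obtain ⟨C, hC, hcard⟩ := Finset.exists_mem_eq_sup _ hne Finset.card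
  rw [Finset.mem_filter] at hC
  refine ⟨C, hC.2, ?_⟩
  rw [ht]
  convert hcard.symm using 2

lemma ht_le {D : Finset (Fin n → ℤ)} {p : Fin n → ℤ} (j : Fin n) {t : ℕ}
    (hch : ∀ C : Finset (Fin n → ℤ), ChainEnd D j C p → C.card ≤ t) :
    ht D j p ≤ t := by
  classical
  rw [ht]
  apply Finset.sup_le
  intro C hC
  rw [Finset.mem_filter] at hC
  exact hch C hC.2

lemma ht_strict_mono {D : Finset (Fin n → ℤ)} {p q : Fin n → ℤ} (hp : p ∈ D) (hq : q ∈ D)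
    (j : Fin n) (hpq : ltc j p q) : ht D j p < ht D j q := by
  classical
  obtain ⟨C, hC, hcard⟩ := exists_ht_chain hp j
  obtain ⟨hCD, hpC, hend, hchain⟩ := hC
  have hqC : q ∉ C := by
    intro hqC
    rcases hend q hqC with rfl | h
    · exact absurd hpq.1 (lt_irrefl _)
    · exact absurd (lt_trans hpq.1 h.1) (lt_irrefl _)
  have hCE : ChainEnd D j (insert q C) q := by
    refine ⟨Finset.insert_subset hq hCD, Finset.mem_insert_self q C, ?_, ?_⟩
    · intro r hr
      rcases Finset.mem_insert.mp hr with rfl | hrC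
      · exact Or.inl rfl
      · rcases hend r hrC with rfl | h
        · exact Or.inr hpq
        · exact Or.inr (ltc_trans h hpq)
    · intro r hr r' hr' hne
      rcases Finset.mem_insert.mp hr with rfl | hrC <;>
        rcases Finset.mem_insert.mp hr' with rfl | hr'C
      · exact absurd rfl hne
      · rcases hend r' hr'C with rfl | h
        · exact Or.inr hpq
        · exact Or.inr (ltc_trans h hpq)
      · rcases hend r hrC with rfl | h
        · exact Or.inl hpq
        · exact Or.inl (ltc_trans h hpq)
      · exact hchain r hrC r' hr'C hne
  have hle : (insert q C).card ≤ ht D j q := by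
    rw [ht]
    apply Finset.le_sup (f := Finset.card)
    rw [Finset.mem_filter, Finset.mem_powerset]
    exact ⟨Finset.insert_subset hq hCD, hCE⟩
  rw [Finset.card_insert_of_notMem hqC] at hle
  omega

/-- The box theorem: a copy-free set of grid points in the window `[0,L)^n`
has at most `t1^n` elements. -/
lemma box_bound (hlam : ∀ j < k, 0 < lam j) (hn : 0 < n) {A : Set (Fin n → ℝ)}
    (hA : ¬ HasCopy ((fun z : ℤ => (z : ℝ)) '' batonZ lam k) A)
    {L : ℕ} {D : Finset (Fin n → ℤ)}
    (hD1 : ∀ p ∈ D, ∀ j, 0 ≤ p j ∧ p j < (L : ℤ))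
    (hD2 : ∀ p ∈ D, X p ∈ A) :
    D.card ≤ t1 lam k L ^ n := by
  classical
  set t := t1 lam k L with hts
  have hhtmem : ∀ p ∈ D, ∀ j, ht D j p ∈ Finset.Icc 1 t := by
    intro p hp j
    rw [Finset.mem_Icc]
    refine ⟨ht_one_le hp j, ?_⟩
    apply ht_le
    intro C hC
    obtain ⟨hCD, -, -, hchain⟩ := hC
    exact chain_card_le hlam hA (fun q hq => hD1 q (hCD hq)) (fun q hq => hD2 q (hCD hq))
      j hchain
  have hinj : Set.InjOn (fun p => fun j : Fin n => ht D j p) ↑D := by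
    intro p hp q hq heq
    by_contra hne
    obtain ⟨j, hor⟩ := ltc_comparable hn hne
    have hj : ht D j p = ht D j q := congrFun heq j
    rcases hor with h | h
    · exact absurd hj (ne_of_lt (ht_strict_mono hp hq j h))
    · exact absurd hj.symm (ne_of_lt (ht_strict_mono hq hp j h))
  have hmaps : ∀ p ∈ D, (fun j : Fin n => ht D j p) ∈
      Fintype.piFinset (fun _ : Fin n => Finset.Icc 1 t) := by
    intro p hp
    rw [Fintype.mem_piFinset]
    intro j
    exact hhtmem p hp j
  have hcard := Finset.card_le_card_of_injOn _ hmaps hinj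
  calc D.card ≤ (Fintype.piFinset (fun _ : Fin n => Finset.Icc 1 t)).card := hcard
    _ = t ^ n := by
        rw [Fintype.card_piFinset]
        simp [Nat.card_Icc]

/-- Pigeonhole: a valid `N`-colouring forces `L^n ≤ N * t1^n`. -/
lemma grid_bound (hlam : ∀ j < k, 0 < lam j) (hn : 0 < n) {N : ℕ}
    (c : (Fin n → ℝ) → Fin N)
    (hc : ∀ i : Fin N, ¬ HasCopy ((fun z : ℤ => (z : ℝ)) '' batonZ lam k) {x | c x = i})
    (L : ℕ) : L ^ n ≤ N * t1 lam k L ^ n := by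
  classical
  set grid : Finset (Fin n → ℤ) := Fintype.piFinset (fun _ : Fin n => Finset.Ico (0:ℤ) (L:ℤ))
    with hgrid
  have hgcard : grid.card = L ^ n := by
    rw [hgrid, Fintype.card_piFinset]
    simp [Int.card_Ico]
  have hsplit : grid.card = ∑ i : Fin N, (grid.filter (fun p => c (X p) = i)).card := by
    apply Finset.card_eq_sum_card_fiberwise
    intro p hp
    exact Finset.mem_univ _
  have hfiber : ∀ i : Fin N, (grid.filter (fun p => c (X p) = i)).card ≤ t1 lam k L ^ n := by
    intro i
    apply box_bound hlam hn (hc i)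
    · intro p hp j
      rw [Finset.mem_filter, hgrid, Fintype.mem_piFinset] at hp
      have := hp.1 j
      rw [Finset.mem_Ico] at this
      exact this
    · intro p hp
      rw [Finset.mem_filter] at hp
      exact hp.2
  calc L ^ n = grid.card := hgcard.symm
    _ = ∑ i : Fin N, (grid.filter (fun p => c (X p) = i)).card := hsplit
    _ ≤ ∑ _i : Fin N, t1 lam k L ^ n := Finset.sum_le_sum (fun i _ => hfiber i)
    _ = N * t1 lam k L ^ n := by
        rw [Finset.sum_const, Finset.card_univ, Fintype.card_fin, smul_eq_mul]

end heights
section coloring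
variable {lam : ℕ → ℤ} {k : ℕ} {n : ℕ}

lemma coloring_exists (hlam : ∀ j < k, 0 < lam j) (hk : 0 < k) (hn : 0 < n) :
    ∃ N : ℕ, ∃ c : (Fin n → ℝ) → Fin N,
      ∀ i : Fin N, ¬ HasCopy ((fun z : ℤ => (z : ℝ)) '' batonZ lam k) {x | c x = i} := by
  classical
  have hs0 : 0 < sg lam k := s_pos hlam hk
  set m : ℕ := (sg lam k).toNat + 1 with hm
  have hmZ : (m : ℤ) = sg lam k + 1 := by
    rw [hm]; push_cast [Int.toNat_of_nonneg hs0.le]; ring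
  have hmpos : (0 : ℤ) < (m : ℤ) := by omega
  set c0 : ℝ → Fin m := fun x => ⟨(⌊x⌋ % (m : ℤ)).toNat, by
    have h1 : 0 ≤ ⌊x⌋ % (m : ℤ) := Int.emod_nonneg _ (by omega)
    have h2 : ⌊x⌋ % (m : ℤ) < (m : ℤ) := Int.emod_lt_of_pos _ hmpos
    omega⟩ with hc0
  refine ⟨m ^ n, fun x => finFunctionFinEquiv (fun j => c0 (x j)), ?_⟩
  rintro i ⟨f, hiso, hsub⟩
  have h0mem : (0 : ℝ) ∈ ((fun z : ℤ => (z : ℝ)) '' batonZ lam k) := by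
    apply (mem_M_iff (lam := lam) (k := k)).mpr
    exact ⟨0, Nat.zero_le k, by rw [sg_zero]; norm_num⟩
  have hsmem : ((sg lam k : ℤ) : ℝ) ∈ ((fun z : ℤ => (z : ℝ)) '' batonZ lam k) :=
    (mem_M_iff (lam := lam) (k := k)).mpr ⟨k, le_rfl, rfl⟩
  set sR : ℝ := ((sg lam k : ℤ) : ℝ) with hsR
  have hsRpos : 0 < sR := by rw [hsR]; exact_mod_cast hs0
  set u := f 0 with hu
  set v := f sR with hv
  have hd : dist u v = sR := by
    rw [hu, hv, hiso 0 h0mem sR hsmem, Real.dist_eq, zero_sub, abs_neg, abs_of_nonneg hsRpos.le]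
  have hexists : ∃ j, sR ≤ dist (u j) (v j) := by
    by_contra hcon
    push_neg at hcon
    have := (dist_pi_lt_iff hsRpos).mpr hcon
    rw [hd] at this
    exact lt_irrefl _ this
  obtain ⟨j, hj⟩ := hexists
  have hle : dist (u j) (v j) ≤ sR := hd ▸ dist_le_pi_dist u v j
  have heq : |u j - v j| = sR := by rw [← Real.dist_eq]; exact le_antisymm hle hj
  have hcu : (finFunctionFinEquiv (fun j => c0 (u j)) : Fin (m ^ n)) = i := by
    have := hsub ⟨0, h0mem, rfl⟩
    rwa [Set.mem_setOf_eq] at this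
  have hcv : (finFunctionFinEquiv (fun j => c0 (v j)) : Fin (m ^ n)) = i := by
    have := hsub ⟨sR, hsmem, rfl⟩
    rwa [Set.mem_setOf_eq] at this
  have hcomp : c0 (u j) = c0 (v j) := by
    have h1 : (fun j => c0 (u j)) = (fun j => c0 (v j)) :=
      finFunctionFinEquiv.injective (hcu.trans hcv.symm)
    exact congrFun h1 j
  have hval : (⌊u j⌋ % (m : ℤ)).toNat = (⌊v j⌋ % (m : ℤ)).toNat := by
    have := congrArg Fin.val hcomp
    simpa [hc0] using this
  have hmod : ⌊u j⌋ % (m : ℤ) = ⌊v j⌋ % (m : ℤ) := by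
    have h1 : 0 ≤ ⌊u j⌋ % (m : ℤ) := Int.emod_nonneg _ (by omega)
    have h2 : 0 ≤ ⌊v j⌋ % (m : ℤ) := Int.emod_nonneg _ (by omega)
    omega
  have hfloor : ⌊v j⌋ = ⌊u j⌋ + sg lam k ∨ ⌊v j⌋ = ⌊u j⌋ - sg lam k := by
    rcases abs_cases (u j - v j) with ⟨h1, -⟩ | ⟨h1, -⟩
    · right
      have : v j = u j - sR := by rw [← heq, h1]; ring
      rw [this, hsR, Int.floor_sub_intCast]
    · left
      have h5 : u j - v j = -sR := by
        rw [h1] at heq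
        linarith
      have h6 : v j = u j + sR := by linarith
      rw [h6, hsR, Int.floor_add_intCast]
  have hdvd : (m : ℤ) ∣ sg lam k := by
    rcases hfloor with h | h
    · have h2 : ⌊u j⌋ % (m : ℤ) = (⌊u j⌋ + sg lam k) % (m : ℤ) := by rw [hmod, h]
      rw [Int.emod_eq_emod_iff_emod_sub_eq_zero] at h2
      have h3 : ⌊u j⌋ - (⌊u j⌋ + sg lam k) = -sg lam k := by ring
      rw [h3] at h2
      have := Int.dvd_of_emod_eq_zero h2
      exact (dvd_neg.mp this)
    · have h2 : ⌊u j⌋ % (m : ℤ) = (⌊u j⌋ - sg lam k) % (m : ℤ) := by rw [hmod, h]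
      rw [Int.emod_eq_emod_iff_emod_sub_eq_zero] at h2
      have h3 : ⌊u j⌋ - (⌊u j⌋ - sg lam k) = sg lam k := by ring
      rw [h3] at h2
      exact Int.dvd_of_emod_eq_zero h2
  have := Int.le_of_dvd hs0 hdvd
  omega

end coloring

end ChiBaton

open ChiBaton in
/-- For an integer baton `B`, `χ(ℝ^n_∞, B) ≥ d(ℤ, B)^(−n)` for all `n`. -/
theorem chi_int_baton_lower (k : ℕ) (hk : 0 < k) (lam : ℕ → ℤ)
    (hlam : ∀ j < k, 0 < lam j) (n : ℕ) (hn : 0 < n) :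
    (densZ (batonZ lam k))⁻¹ ^ n ≤ (chrom ((fun z : ℤ => (z : ℝ)) '' batonZ lam k) n : ℝ) := by
  classical
  obtain ⟨N₀, c₀, hc₀⟩ := coloring_exists (n := n) hlam hk hn
  have hne : {N : ℕ | ∃ c : (Fin n → ℝ) → Fin N,
      ∀ i : Fin N, ¬ HasCopy ((fun z : ℤ => (z : ℝ)) '' batonZ lam k) {x | c x = i}}.Nonempty :=
    ⟨N₀, c₀, hc₀⟩
  have hmem : chrom ((fun z : ℤ => (z : ℝ)) '' batonZ lam k) n ∈
      {N : ℕ | ∃ c : (Fin n → ℝ) → Fin N,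
        ∀ i : Fin N, ¬ HasCopy ((fun z : ℤ => (z : ℝ)) '' batonZ lam k) {x | c x = i}} := by
    unfold chrom
    exact Nat.sInf_mem hne
  set N : ℕ := chrom ((fun z : ℤ => (z : ℝ)) '' batonZ lam k) n with hNdef
  obtain ⟨c, hc⟩ := hmem
  set sTN : ℕ := (sg lam k).toNat with hsTN
  have hsTNpos : 1 ≤ sTN := by
    have := s_pos hlam hk
    omega
  set dz : ℝ := densZ (batonZ lam k) with hdz
  have hdenL : ∀ L : ℕ, 1 ≤ L → (t1 lam k L : ℝ) / ((L : ℝ) + (sTN : ℝ)) ≤ dz :=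
    fun L hL => densZ_ge hlam hk L hL
  have hgrid : ∀ L : ℕ, L ^ n ≤ N * t1 lam k L ^ n := fun L => grid_bound hlam hn c hc L
  have hdzpos : 0 < dz := by
    refine lt_of_lt_of_le ?_ (hdenL 1 le_rfl)
    have h1 : (1 : ℝ) ≤ (t1 lam k 1 : ℝ) := by exact_mod_cast t1_pos hlam hk le_rfl
    positivity
  have key : ∀ L : ℕ, 1 ≤ L → dz⁻¹ ^ n ≤ (N : ℝ) * (((L : ℝ) + (sTN : ℝ)) / L) ^ n := by
    intro L hL
    have ht1p : (0 : ℝ) < (t1 lam k L : ℝ) := by exact_mod_cast t1_pos hlam hk hL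
    have hLp : (0 : ℝ) < (L : ℝ) := by exact_mod_cast hL
    have h1 : dz⁻¹ ≤ ((L : ℝ) + (sTN : ℝ)) / (t1 lam k L : ℝ) := by
      have h2 := hdenL L hL
      have h3 : (0 : ℝ) < (t1 lam k L : ℝ) / ((L : ℝ) + (sTN : ℝ)) := by positivity
      calc dz⁻¹ ≤ ((t1 lam k L : ℝ) / ((L : ℝ) + (sTN : ℝ)))⁻¹ := inv_anti₀ h3 h2
        _ = ((L : ℝ) + (sTN : ℝ)) / (t1 lam k L : ℝ) := by rw [inv_div]
    have h2 : dz⁻¹ ^ n ≤ (((L : ℝ) + (sTN : ℝ)) / (t1 lam k L : ℝ)) ^ n :=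
      pow_le_pow_left₀ (inv_nonneg.mpr hdzpos.le) h1 n
    have h4 : (L : ℝ) ^ n ≤ (N : ℝ) * (t1 lam k L : ℝ) ^ n := by exact_mod_cast hgrid L
    calc dz⁻¹ ^ n ≤ (((L : ℝ) + (sTN : ℝ)) / (t1 lam k L : ℝ)) ^ n := h2
      _ = ((L : ℝ) + (sTN : ℝ)) ^ n / (t1 lam k L : ℝ) ^ n := div_pow _ _ n
      _ ≤ (N : ℝ) * (((L : ℝ) + (sTN : ℝ)) / L) ^ n := by
          rw [div_pow]
          have he : (N : ℝ) * (((L : ℝ) + (sTN : ℝ)) ^ n / (L : ℝ) ^ n)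
              = ((N : ℝ) * ((L : ℝ) + (sTN : ℝ)) ^ n) / (L : ℝ) ^ n := by ring
          rw [he, div_le_div_iff₀ (by positivity) (by positivity)]
          have h5 := mul_le_mul_of_nonneg_left h4
            (pow_nonneg (by positivity : (0 : ℝ) ≤ (L : ℝ) + (sTN : ℝ)) n)
          nlinarith [h5]
  have h0 : Filter.Tendsto (fun L : ℕ => ((L : ℝ))⁻¹) Filter.atTop (nhds 0) :=
    tendsto_inv_atTop_zero.comp tendsto_natCast_atTop_atTop
  have h1 : Filter.Tendsto (fun L : ℕ => 1 + (sTN : ℝ) * ((L : ℝ))⁻¹) Filter.atTop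
      (nhds (1 + (sTN : ℝ) * 0)) := tendsto_const_nhds.add (tendsto_const_nhds.mul h0)
  have h2 : Filter.Tendsto (fun L : ℕ => (N : ℝ) * (1 + (sTN : ℝ) * ((L : ℝ))⁻¹) ^ n)
      Filter.atTop (nhds ((N : ℝ) * (1 + (sTN : ℝ) * 0) ^ n)) := (h1.pow n).const_mul _
  have hval : (N : ℝ) * (1 + (sTN : ℝ) * 0) ^ n = (N : ℝ) := by norm_num
  rw [hval] at h2
  have h3 : Filter.Tendsto (fun L : ℕ => (N : ℝ) * (((L : ℝ) + (sTN : ℝ)) / L) ^ n)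
      Filter.atTop (nhds (N : ℝ)) := by
    apply h2.congr'
    filter_upwards [Filter.eventually_ge_atTop 1] with L hL
    have hL0 : (L : ℝ) ≠ 0 := by
      have : (0 : ℝ) < (L : ℝ) := by exact_mod_cast hL
      exact ne_of_gt this
    congr 1
    congr 1
    field_simp
  apply ge_of_tendsto h3
  filter_upwards [Filter.eventually_ge_atTop 1] with L hL
  exact key L hL
end

section
/- Let m, n be positive integers and let X ⊆ (ℤ/mℤ)^n be a nonempty set. Then the additive group (ℤ/mℤ)^n can be covered by at most m^n·(1 + ln|X|)/|X| translates of X; that is, there exist elements x_1, …, x_r ∈ (ℤ/mℤ)^n with r ≤ m^n·(1 + ln|X|)/|X| such that (X + x_1) ∪ ⋯ ∪ (X + x_r) = (ℤ/mℤ)^n. -/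
open Set Filter

noncomputable def phiCov (A x : ℝ) : ℝ := if x ≤ A then x else A + A * Real.log (x / A)

lemma one_sub_inv_le_log {x : ℝ} (hx : 0 < x) : 1 - 1/x ≤ Real.log x := by
  have h := Real.log_le_sub_one_of_pos (show (0:ℝ) < 1/x by positivity)
  rw [one_div, Real.log_inv] at h
  have hx' : (1:ℝ)/x = x⁻¹ := one_div x
  rw [hx']
  linarith

lemma phiCov_step {A u v : ℝ} (hA : 1 ≤ A) (hv0 : 0 ≤ v) (h1 : v + 1 ≤ u)
    (h2 : v ≤ u - u / A) : phiCov A v + 1 ≤ phiCov A u := by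
  have hA0 : (0:ℝ) < A := by linarith
  have hu0 : (0:ℝ) < u := by linarith
  unfold phiCov
  by_cases hu : u ≤ A
  · rw [if_pos (by linarith : v ≤ A), if_pos hu]; linarith
  · push_neg at hu
    rw [if_neg (not_le.mpr hu)]
    set L := Real.log (u / A) with hL
    have hlog : 1 - A/u ≤ L := by
      have h := one_sub_inv_le_log (show (0:ℝ) < u / A by positivity)
      rwa [one_div_div] at h
    have hl : u - A ≤ u * L := by
      have := mul_le_mul_of_nonneg_left hlog hu0.le
      have he : u * (1 - A/u) = u - A := by field_simp
      linarith [he ▸ this]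
    by_cases hv : v ≤ A
    · rw [if_pos hv]
      by_cases hc : (A - 1) * u ≤ A * A
      · -- use v ≤ u - u/A
        have h2' : A * v ≤ A * u - u := by
          have := mul_le_mul_of_nonneg_left h2 hA0.le
          have he : A * (u - u / A) = A * u - u := by field_simp
          linarith [he ▸ this]
        have e1 : A*A*u - A*A*A ≤ A*A*(u*L) :=
          le_trans (by nlinarith) (mul_le_mul_of_nonneg_left hl (by positivity))
        have key : A*u*(v+1) ≤ A*u*(A + A*L) := by nlinarith [e1, h2', hc, hu, hu0, hA0]
        have := (mul_le_mul_iff_right₀ (by positivity : (0:ℝ) < A*u)).mp key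
        linarith
      · push_neg at hc
        have key : u * 1 ≤ u * (A * L) := by nlinarith [hl, hc]
        have := (mul_le_mul_iff_right₀ hu0).mp key
        linarith
    · push_neg at hv
      rw [if_neg (not_le.mpr hv)]
      have hv0' : (0:ℝ) < v := by linarith
      have hsplit : L = Real.log (v / A) + Real.log (u / v) := by
        rw [hL, Real.log_div hu0.ne' hA0.ne', Real.log_div hv0'.ne' hA0.ne',
          Real.log_div hu0.ne' hv0'.ne']
        ring
      have hlog2 : 1 - v/u ≤ Real.log (u / v) := by
        have h := one_sub_inv_le_log (show (0:ℝ) < u / v by positivity)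
        rwa [one_div_div] at h
      -- A * log(u/v) ≥ 1 : from v ≤ u - u/A
      have h2' : A * v ≤ A * u - u := by
        have := mul_le_mul_of_nonneg_left h2 hA0.le
        have he : A * (u - u / A) = A * u - u := by field_simp
        linarith [he ▸ this]
      have key : u * 1 ≤ u * (A * Real.log (u/v)) := by
        have e : A * u * (1 - v/u) = A*u - A*v := by field_simp
        nlinarith [mul_le_mul_of_nonneg_left hlog2 (by positivity : (0:ℝ) ≤ A*u)]
      have := (mul_le_mul_iff_right₀ hu0).mp key
      rw [hsplit]
      linarith

lemma cover_aux {G : Type*} [AddCommGroup G] [Fintype G] [DecidableEq G]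
    (X : Finset G) (hX : X.Nonempty) :
    ∀ (k : ℕ) (U : Finset G), U.card ≤ k →
      ∃ s : Finset G,
        (∀ w ∈ U, ∃ x ∈ s, ∃ z ∈ X, w = z + x) ∧
        (s.card : ℝ) ≤ phiCov ((Fintype.card G : ℝ) / X.card) U.card := by
  classical
  intro k
  induction k with
  | zero =>
    intro U hU
    have : U = ∅ := Finset.card_eq_zero.mp (Nat.le_zero.mp hU)
    subst this
    refine ⟨∅, by simp, ?_⟩
    simp [phiCov, if_pos (by positivity : (0:ℝ) ≤ (Fintype.card G : ℝ) / X.card)]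
  | succ k ih =>
    intro U hU
    rcases U.eq_empty_or_nonempty with rfl | hUn
    · refine ⟨∅, by simp, ?_⟩
      simp [phiCov, if_pos (by positivity : (0:ℝ) ≤ (Fintype.card G : ℝ) / X.card)]
    · set N := Fintype.card G with hN
      set K := X.card with hK
      have hK1 : 1 ≤ K := Finset.card_pos.mpr hX
      have hKN : K ≤ N := Finset.card_le_univ X
      have hN0 : 0 < N := lt_of_lt_of_le hK1 hKN
      -- counting
      have hsum : ∑ x : G, (U ∩ X.image (· + x)).card = K * U.card := by
        have hins : ∀ x : G, (U ∩ X.image (· + x)).card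
            = ∑ w ∈ U, if w - x ∈ X then 1 else 0 := by
          intro x
          rw [← Finset.filter_mem_eq_inter, Finset.card_filter]
          refine Finset.sum_congr rfl fun w _ => ?_
          congr 1
          simp only [Finset.mem_image, eq_iff_iff]
          constructor
          · rintro ⟨z, hz, rfl⟩; simpa using hz
          · intro h; exact ⟨w - x, h, by abel⟩
        calc ∑ x : G, (U ∩ X.image (· + x)).card
            = ∑ x : G, ∑ w ∈ U, if w - x ∈ X then 1 else 0 :=
              Finset.sum_congr rfl fun x _ => hins x
          _ = ∑ w ∈ U, ∑ x : G, if w - x ∈ X then 1 else 0 := Finset.sum_comm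
          _ = ∑ w ∈ U, K := by
              refine Finset.sum_congr rfl fun w _ => ?_
              rw [← Finset.card_filter]
              have : Finset.univ.filter (fun x => w - x ∈ X) = X.image (fun z => w - z) := by
                ext x
                simp only [Finset.mem_filter, Finset.mem_univ, true_and, Finset.mem_image]
                constructor
                · intro h; exact ⟨w - x, h, by abel⟩
                · rintro ⟨z, hz, rfl⟩; simpa using hz
              rw [this, Finset.card_image_of_injective _ sub_right_injective]
          _ = K * U.card := by rw [Finset.sum_const, smul_eq_mul, mul_comm]
      obtain ⟨x, -, hx⟩ : ∃ x ∈ Finset.univ, K * U.card ≤ N * (U ∩ X.image (· + x)).card := by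
        apply Finset.exists_le_of_sum_le Finset.univ_nonempty
        rw [Finset.sum_const, ← Finset.mul_sum, hsum]
        simp [hN, Finset.card_univ, mul_comm]
      set c := (U ∩ X.image (· + x)).card with hc
      have hc1 : 1 ≤ c := by
        by_contra h
        push_neg at h
        have hc0 : c = 0 := by omega
        have h1 : 1 ≤ K * U.card :=
          le_trans (by norm_num) (Nat.mul_le_mul hK1 (Finset.card_pos.mpr hUn))
        rw [hc0, mul_zero] at hx
        exact Nat.not_succ_le_zero 0 (le_trans h1 hx)
      have hcU : c ≤ U.card :=
        Finset.card_le_card Finset.inter_subset_left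
      set U' := U \ X.image (· + x) with hU'
      have hcard' : U'.card = U.card - c := by
        have h := Finset.card_sdiff_add_card_inter U (X.image (· + x))
        have h2 : U'.card + c = U.card := h
        omega
      have hle : U'.card ≤ k := by
        have hU1 : 1 ≤ U.card := Finset.card_pos.mpr hUn
        omega
      obtain ⟨s', hs'cov, hs'card⟩ := ih U' hle
      refine ⟨insert x s', ?_, ?_⟩
      · intro w hw
        by_cases hwT : w ∈ X.image (· + x)
        · obtain ⟨z, hz, rfl⟩ := Finset.mem_image.mp hwT
          exact ⟨x, Finset.mem_insert_self x s', z, hz, rfl⟩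
        · obtain ⟨x', hx', z, hz, rfl⟩ := hs'cov w (Finset.mem_sdiff.mpr ⟨hw, hwT⟩)
          exact ⟨x', Finset.mem_insert_of_mem hx', z, hz, rfl⟩
      · set A := (N : ℝ) / K with hA
        have hN0' : (0:ℝ) < (N:ℝ) := by exact_mod_cast hN0
        have hK0' : (0:ℝ) < (K:ℝ) := by exact_mod_cast hK1
        have hA1 : (1:ℝ) ≤ A := by
          rw [hA, le_div_iff₀ hK0']
          simpa using (Nat.cast_le (α := ℝ)).mpr hKN
        have hstep : phiCov A (U'.card) + 1 ≤ phiCov A (U.card) := by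
          apply phiCov_step hA1 (by positivity)
          · rw [hcard', Nat.cast_sub hcU]
            have h1c : (1:ℝ) ≤ (c:ℝ) := by exact_mod_cast hc1
            linarith
          · rw [hcard', Nat.cast_sub hcU]
            have hdiv : (U.card : ℝ) / A = (U.card : ℝ) * K / N := by
              rw [hA, div_div_eq_mul_div]
            rw [hdiv]
            have hfin : (U.card : ℝ) * K / N ≤ (c:ℝ) := by
              rw [div_le_iff₀ hN0']
              have hKu : ((K:ℝ)) * U.card ≤ (N:ℝ) * c := by exact_mod_cast hx
              nlinarith [hKu]
            linarith
        calc ((insert x s').card : ℝ) ≤ (s'.card : ℝ) + 1 := by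
              exact_mod_cast Finset.card_insert_le x s'
          _ ≤ phiCov A (U'.card) + 1 := by linarith
          _ ≤ phiCov A (U.card) := hstep

/-- Erdős–Rogers-type covering: for a nonempty `X ⊆ (ℤ/mℤ)^n`, the group `(ℤ/mℤ)^n`
can be covered by at most `m^n (1 + ln|X|)/|X|` translates of `X`. -/
theorem cover_by_translates (m n : ℕ) (hm : 0 < m) (hn : 0 < n)
    (X : Finset (Fin n → ZMod m)) (hX : X.Nonempty) :
    ∃ (r : ℕ) (t : Fin r → (Fin n → ZMod m)),
      (r : ℝ) ≤ (m : ℝ) ^ n * ((1 + Real.log (X.card : ℝ)) / (X.card : ℝ)) ∧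
      ∀ y : Fin n → ZMod m, ∃ i : Fin r, ∃ z ∈ X, y = z + t i := by
  classical
  haveI : NeZero m := ⟨hm.ne'⟩
  have hcardG : Fintype.card (Fin n → ZMod m) = m ^ n := by
    simp [Fintype.card_fun, ZMod.card]
  obtain ⟨s, hcov, hcard⟩ := cover_aux X hX (Finset.univ.card) Finset.univ le_rfl
  refine ⟨s.card, fun i => ((Fintype.equivFinOfCardEq (Fintype.card_coe s)).symm i : _), ?_, ?_⟩
  · have hK0 : 0 < X.card := Finset.card_pos.mpr hX
    have hKpos : (0:ℝ) < (X.card:ℝ) := by exact_mod_cast hK0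
    have hK1 : (1:ℝ) ≤ (X.card:ℝ) := by exact_mod_cast hK0
    have hNpos : (0:ℝ) < (m:ℝ)^n := by positivity
    have hNcast : ((Fintype.card (Fin n → ZMod m) : ℕ) : ℝ) = (m:ℝ)^n := by
      rw [hcardG]; push_cast; ring
    have hUcast : (((Finset.univ : Finset (Fin n → ZMod m)).card : ℕ) : ℝ) = (m:ℝ)^n := by
      rw [Finset.card_univ]; exact hNcast
    refine le_trans hcard ?_
    rw [hUcast, hNcast]
    set K := (X.card : ℝ) with hKdef
    set N := (m:ℝ)^n with hNdef
    have hKN : K ≤ N := by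
      rw [hKdef, ← hNcast]
      exact_mod_cast Finset.card_le_univ X
    unfold phiCov
    split_ifs with h
    · have hmul : N * K ≤ N := by
        have h2 := mul_le_mul_of_nonneg_right h hKpos.le
        rw [div_mul_cancel₀ _ hKpos.ne'] at h2
        linarith
      have hKeq : K = 1 := le_antisymm (by nlinarith) hK1
      rw [hKeq]
      simp
    · have harg : N / (N / K) = K := by
        field_simp
      rw [harg]
      have hEq : N / K + N / K * Real.log K = N * ((1 + Real.log K) / K) := by
        field_simp
      linarith [hEq.le]
  · intro y
    obtain ⟨x, hxs, z, hz, hy⟩ := hcov y (Finset.mem_univ y)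
    refine ⟨Fintype.equivFinOfCardEq (Fintype.card_coe s) ⟨x, hxs⟩, z, hz, ?_⟩
    rw [hy]
    congr 1
    simp
end

section
/- Let k ≥ 2 and let m, n ∈ ℕ with m ≤ n. Let g : {0,1,…,k}^m → {0,1,…,k}^n be an isometry (a distance-preserving map with respect to the max-norm metrics) and put t = ⌊k/2⌋. Then there exists z ∈ {0,1,…,k}^m such that g(z) ∈ {0,1,…,k}^n has at least m coordinates equal to t. -/
open Set Filter

/-- `{0,1,…,k}^m ⊆ ℝ^m` with the max metric. -/
def box (m k : ℕ) : Set (Fin m → ℝ) :=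
  {x | ∀ i, ∃ j : ℕ, j ≤ k ∧ x i = (j : ℝ)}

/-- Elements of the box have coordinates in `[0, k]`. -/
lemma box_coord_bounds {m k : ℕ} {x : Fin m → ℝ} (hx : x ∈ box m k) (i : Fin m) :
    0 ≤ x i ∧ x i ≤ (k : ℝ) := by
  obtain ⟨j, hj, hxj⟩ := hx i
  rw [hxj]
  exact ⟨by positivity, by exact_mod_cast hj⟩

/-- Two naturals `≤ k` whose real distance is not `k` are at distance `≤ k - 1`. -/
lemma nat_gap {k a b : ℕ} (ha : a ≤ k) (hb : b ≤ k) (h : |(a : ℝ) - b| ≠ k) :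
    |(a : ℝ) - b| ≤ (k : ℝ) - 1 := by
  have key : ∀ c d : ℕ, c ≤ d → |(c : ℝ) - d| = ((d - c : ℕ) : ℝ) := by
    intro c d hcd
    rw [abs_sub_comm, abs_of_nonneg (sub_nonneg.mpr (by exact_mod_cast hcd))]
    push_cast [hcd]; ring
  rcases le_total a b with hab | hab
  · rw [key a b hab] at h ⊢
    have hne : b - a ≠ k := by exact_mod_cast h
    have hle : b - a ≤ k - 1 := by omega
    have hk1 : 1 ≤ k := by omega
    rw [show (k : ℝ) - 1 = ((k - 1 : ℕ) : ℝ) by push_cast [hk1]; ring]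
    exact_mod_cast hle
  · rw [abs_sub_comm] at h ⊢
    rw [key b a hab] at h ⊢
    have hne : a - b ≠ k := by exact_mod_cast h
    have hle : a - b ≤ k - 1 := by omega
    have hk1 : 1 ≤ k := by omega
    rw [show (k : ℝ) - 1 = ((k - 1 : ℕ) : ℝ) by push_cast [hk1]; ring]
    exact_mod_cast hle

/-- If `x, y ∈ [0,k]` and `|x - y| = k` then they are the two endpoints. -/
lemma endpoint_pin {k x y : ℝ} (hx0 : 0 ≤ x) (hxk : x ≤ k) (hy0 : 0 ≤ y) (hyk : y ≤ k)
    (h : |x - y| = k) : (x = 0 ∧ y = k) ∨ (x = k ∧ y = 0) := by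
  rcases abs_cases (x - y) with ⟨h1, _⟩ | ⟨h1, _⟩
  · right; constructor <;> linarith [h1 ▸ h]
  · left; constructor <;> linarith [h1 ▸ h]

/-- If `k ≥ 2`, `m ≤ n`, and `g : {0,…,k}^m → {0,…,k}^n` is an isometry (max metrics),
then with `t = ⌊k/2⌋` there exists `z ∈ {0,…,k}^m` such that `g(z)` has at least `m`
coordinates equal to `t`. -/
theorem isometry_middle_coords (k m n : ℕ) (hk : 2 ≤ k) (hm : 1 ≤ m) (hmn : m ≤ n)
    (g : (Fin m → ℝ) → (Fin n → ℝ))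
    (hmap : ∀ x ∈ box m k, g x ∈ box n k)
    (hiso : ∀ x ∈ box m k, ∀ y ∈ box m k, dist (g x) (g y) = dist x y) :
    ∃ z ∈ box m k, m ≤ {i : Fin n | g z i = ((k / 2 : ℕ) : ℝ)}.ncard := by
  classical
  set t : ℕ := k / 2 with htdef
  set T : ℝ := (t : ℝ) with hTdef
  set K : ℝ := (k : ℝ) with hKdef
  have ht1 : 1 ≤ t := by omega
  have htk : t ≤ k := by omega
  have h2t : 2 * t ≤ k := by omega
  have hk2t : k ≤ 2 * t + 1 := by omega
  have hT1 : (1 : ℝ) ≤ T := by rw [hTdef]; exact_mod_cast ht1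
  have hTK : T ≤ K := by rw [hTdef, hKdef]; exact_mod_cast htk
  have h2T : 2 * T ≤ K := by rw [hTdef, hKdef]; exact_mod_cast h2t
  have hK2T : K - 2 * T ≤ 1 := by
    have h : (k : ℝ) ≤ 2 * (t : ℝ) + 1 := by exact_mod_cast hk2t
    rw [hTdef, hKdef]; linarith
  have hKT : (k : ℝ) - T = ((k - t : ℕ) : ℝ) := by rw [hTdef]; push_cast [htk]; ring
  -- the test points
  set p : Fin m → Fin m → ℝ := fun i j => if j = i then K else T with hpdef
  set q : Fin m → Fin m → ℝ := fun i j => if j = i then 0 else T with hqdef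
  have hpbox : ∀ i, p i ∈ box m k := by
    intro i j
    by_cases hji : j = i
    · exact ⟨k, le_refl k, by simp [hpdef, hji, hKdef]⟩
    · exact ⟨t, htk, by simp [hpdef, hji, hTdef]⟩
  have hqbox : ∀ i, q i ∈ box m k := by
    intro i j
    by_cases hji : j = i
    · exact ⟨0, by omega, by simp [hqdef, hji]⟩
    · exact ⟨t, htk, by simp [hqdef, hji, hTdef]⟩
  -- dist (p i) (q i) = K
  have hKpos : (0 : ℝ) ≤ K := by positivity
  have hdpq : ∀ i, dist (p i) (q i) = K := by
    intro i
    apply le_antisymm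
    · refine (dist_pi_le_iff hKpos).mpr fun j => ?_
      by_cases hji : j = i
      · simp [hpdef, hqdef, hji, Real.dist_eq, abs_of_nonneg hKpos]
      · simp [hpdef, hqdef, hji, Real.dist_eq]; positivity
    · have h := dist_le_pi_dist (p i) (q i) i
      simpa [hpdef, hqdef, Real.dist_eq, abs_of_nonneg hKpos] using h
  -- for each i, find a coordinate where the images of p i and q i are at the endpoints
  have hsig : ∀ i : Fin m, ∃ s : Fin n,
      (g (q i) s = 0 ∧ g (p i) s = K) ∨ (g (q i) s = K ∧ g (p i) s = 0) := by
    intro i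
    have hgd : dist (g (p i)) (g (q i)) = K := by
      rw [hiso _ (hpbox i) _ (hqbox i), hdpq i]
    have : ∃ s : Fin n, dist (g (p i) s) (g (q i) s) = K := by
      by_contra hc
      push_neg at hc
      have hle : dist (g (p i)) (g (q i)) ≤ K - 1 := by
        refine (dist_pi_le_iff (by linarith)).mpr fun s => ?_
        obtain ⟨a, ha, has⟩ := hmap _ (hpbox i) s
        obtain ⟨b, hb, hbs⟩ := hmap _ (hqbox i) s
        have := hc s
        rw [Real.dist_eq, has, hbs] at this ⊢
        exact nat_gap ha hb this
      rw [hgd] at hle; linarith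
    obtain ⟨s, hs⟩ := this
    refine ⟨s, ?_⟩
    obtain ⟨hp0, hpk⟩ := box_coord_bounds (hmap _ (hpbox i)) s
    obtain ⟨hq0, hqk⟩ := box_coord_bounds (hmap _ (hqbox i)) s
    rw [Real.dist_eq] at hs
    rcases endpoint_pin hp0 hpk hq0 hqk hs with ⟨h1, h2⟩ | ⟨h1, h2⟩
    · exact Or.inr ⟨h2, h1⟩
    · exact Or.inl ⟨h2, h1⟩
  choose σ hσ using hsig
  -- cross distances are small
  have hcross : ∀ (i j : Fin m), i ≠ j → ∀ u v : Fin m → ℝ,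
      (u = p i ∨ u = q i) → (v = p j ∨ v = q j) → dist u v ≤ K - T := by
    intro i j hij u v hu hv
    refine (dist_pi_le_iff (by linarith)).mpr fun a => ?_
    have hua : u a = (if a = i then u a else T) := by
      rcases hu with h | h <;> subst h <;> by_cases hai : a = i <;> simp [hpdef, hqdef, hai]
    have hva : v a = (if a = j then v a else T) := by
      rcases hv with h | h <;> subst h <;> by_cases haj : a = j <;> simp [hpdef, hqdef, haj]
    have huai : a = i → (u a = 0 ∨ u a = K) := by
      intro hai
      rcases hu with h | h <;> subst h <;> simp [hpdef, hqdef, hai]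
    have hvaj : a = j → (v a = 0 ∨ v a = K) := by
      intro haj
      rcases hv with h | h <;> subst h <;> simp [hpdef, hqdef, haj]
    rw [Real.dist_eq]
    by_cases hai : a = i
    · have hvT : v a = T := by
        rw [hva, if_neg (by rw [hai]; exact hij)]
      rcases huai hai with h | h
      · rw [h, hvT, abs_sub_comm, sub_zero, abs_of_nonneg (by linarith)]; linarith
      · rw [h, hvT, abs_of_nonneg (by linarith)]
    · have huT : u a = T := by rw [hua, if_neg hai]
      by_cases haj : a = j
      · rcases hvaj haj with h | h
        · rw [h, huT, sub_zero, abs_of_nonneg (by linarith)]; linarith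
        · rw [h, huT, abs_of_nonpos (by linarith)]; linarith
      · have hvT : v a = T := by rw [hva, if_neg haj]
        rw [huT, hvT, sub_self, abs_zero]; linarith
  -- σ is injective
  have hinj : Function.Injective σ := by
    intro i j hij
    by_contra hne
    -- pick u with image K at σ i, v with image 0 at σ j
    obtain ⟨u, hu, huK⟩ : ∃ u, (u = p i ∨ u = q i) ∧ g u (σ i) = K := by
      rcases hσ i with ⟨h1, h2⟩ | ⟨h1, h2⟩
      · exact ⟨p i, Or.inl rfl, h2⟩
      · exact ⟨q i, Or.inr rfl, h1⟩
    obtain ⟨v, hv, hv0⟩ : ∃ v, (v = p j ∨ v = q j) ∧ g v (σ j) = 0 := by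
      rcases hσ j with ⟨h1, h2⟩ | ⟨h1, h2⟩
      · exact ⟨q j, Or.inr rfl, h1⟩
      · exact ⟨p j, Or.inl rfl, h2⟩
    have hubox : u ∈ box m k := by rcases hu with h | h <;> subst h <;> [exact hpbox i; exact hqbox i]
    have hvbox : v ∈ box m k := by rcases hv with h | h <;> subst h <;> [exact hpbox j; exact hqbox j]
    have hd1 : K ≤ dist (g u) (g v) := by
      have := dist_le_pi_dist (g u) (g v) (σ i)
      rw [Real.dist_eq, huK, hij, hv0] at this
      simpa [abs_of_nonneg hKpos] using this
    rw [hiso _ hubox _ hvbox] at hd1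
    have hd2 := hcross i j hne u v hu hv
    linarith
  -- the witness point
  set z : Fin m → ℝ := fun i => if g (q i) (σ i) = 0 then T else K - T with hzdef
  have hzbox : z ∈ box m k := by
    intro i
    by_cases h0 : g (q i) (σ i) = 0
    · exact ⟨t, htk, by simp [hzdef, h0, hTdef]⟩
    · exact ⟨k - t, by omega, by rw [← hKT]; simp [hzdef, h0, hKdef]⟩
  have hzT : ∀ i, T ≤ z i := by
    intro i
    by_cases h0 : g (q i) (σ i) = 0 <;> simp [hzdef, h0] <;> linarith
  have hzK : ∀ i, z i ≤ K - T := by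
    intro i
    by_cases h0 : g (q i) (σ i) = 0 <;> simp [hzdef, h0] <;> linarith
  -- distance estimates from z
  have hdzq : ∀ i, dist z (q i) ≤ z i := by
    intro i
    refine (dist_pi_le_iff (by linarith [hzT i])).mpr fun a => ?_
    rw [Real.dist_eq]
    by_cases hai : a = i
    · subst hai
      simp only [hqdef, if_pos rfl, sub_zero]
      rw [abs_of_nonneg (by linarith [hzT a])]
    · simp only [hqdef, if_neg hai]
      have h1 := hzT a
      have h2 := hzK a
      rw [abs_of_nonneg (by linarith)]
      linarith [hzT i]
  have hdzp : ∀ i, dist z (p i) ≤ K - z i := by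
    intro i
    refine (dist_pi_le_iff (by linarith [hzK i])).mpr fun a => ?_
    rw [Real.dist_eq]
    by_cases hai : a = i
    · subst hai
      simp only [hpdef, if_pos rfl]
      rw [abs_of_nonpos (by linarith [hzK a])]
      ring_nf
      linarith
    · simp only [hpdef, if_neg hai]
      have h1 := hzT a
      have h2 := hzK a
      rw [abs_of_nonneg (by linarith)]
      linarith [hzK i]
  -- the key: g z is t at every σ i
  have hkey : ∀ i, g z (σ i) = T := by
    intro i
    have b1 : |g z (σ i) - g (q i) (σ i)| ≤ z i := by
      have h := dist_le_pi_dist (g z) (g (q i)) (σ i)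
      rw [hiso _ hzbox _ (hqbox i)] at h
      rw [← Real.dist_eq]
      exact h.trans (hdzq i)
    have b2 : |g z (σ i) - g (p i) (σ i)| ≤ K - z i := by
      have h := dist_le_pi_dist (g z) (g (p i)) (σ i)
      rw [hiso _ hzbox _ (hpbox i)] at h
      rw [← Real.dist_eq]
      exact h.trans (hdzp i)
    rw [abs_le] at b1 b2
    by_cases h0 : g (q i) (σ i) = 0
    · have hzi : z i = T := by simp [hzdef, h0]
      have hpK : g (p i) (σ i) = K := by
        rcases hσ i with ⟨h1, h2⟩ | ⟨h1, h2⟩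
        · exact h2
        · exfalso; rw [h0] at h1; linarith
      rw [h0, hzi] at b1
      rw [hpK, hzi] at b2
      linarith [b1.1, b1.2, b2.1, b2.2]
    · have hzi : z i = K - T := by simp [hzdef, h0]
      rcases hσ i with ⟨h1, h2⟩ | ⟨h1, h2⟩
      · exact absurd h1 h0
      rw [h1, hzi] at b1
      rw [h2, hzi] at b2
      linarith [b1.1, b1.2, b2.1, b2.2]
  -- conclude
  refine ⟨z, hzbox, ?_⟩
  have hsub : Set.range σ ⊆ {i : Fin n | g z i = T} := by
    rintro s ⟨i, rfl⟩
    exact hkey i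
  calc m = (Set.range σ).ncard := by
        rw [← Set.image_univ, Set.ncard_image_of_injective _ hinj, Set.ncard_univ]
        simp
    _ ≤ {i : Fin n | g z i = T}.ncard :=
        Set.ncard_le_ncard hsub (Set.toFinite _)
end

section
/- For every n ∈ ℕ and every unbounded metric space M, there exists a colouring of ℝ^n (equipped with the max-norm metric) with 2 colours such that no colour class contains an isometric copy of M. -/
open Set Filter

/-- For every `n` and every unbounded metric space `M`, there is a `2`-colouring of
`ℝ^n` (max metric) such that no colour class contains an isometric copy of `M`. -/
theorem two_colouring_unbounded (n : ℕ) (M : Type*) [MetricSpace M]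
    (hM : ∀ R : ℝ, 0 < R → ∃ x y : M, R < dist x y) :
    ∃ c : (Fin n → ℝ) → Fin 2, ∀ i : Fin 2,
      ¬ ∃ f : M → (Fin n → ℝ), Isometry f ∧ Set.range f ⊆ {x | c x = i} := by
  classical
  obtain ⟨m₀, -, -⟩ := hM 1 one_pos
  -- distances from `m₀` are unbounded
  have key : ∀ R : ℝ, ∃ m : M, R < dist m m₀ := by
    intro R
    obtain ⟨x, y, hxy⟩ := hM (2 * max R 1) (by positivity)
    have h1 : dist x y ≤ dist x m₀ + dist y m₀ := dist_triangle_right x y m₀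
    have h2 : R ≤ max R 1 := le_max_left R 1
    rcases le_total (dist x m₀) (dist y m₀) with h | h
    · exact ⟨y, by nlinarith⟩
    · exact ⟨x, by nlinarith⟩
  choose g hg using key
  set p : ℕ → M := fun k => Nat.rec (g 1) (fun k pk => g (dist pk m₀ + 2 * k + 3)) k with hp
  set D : ℕ → ℝ := fun k => dist (p k) m₀ with hD
  have hD0 : 1 < D 0 := hg 1
  have hDs : ∀ k : ℕ, D k + 2 * k + 3 < D (k + 1) := fun k => hg _
  have hsep : ∀ k l : ℕ, k < l → D k + k + l < D l := by
    intro k l hkl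
    induction l with
    | zero => omega
    | succ l ih =>
      have h2 := hDs l
      rcases Nat.lt_succ_iff_lt_or_eq.mp hkl with h | h
      · have h3 := ih h
        push_cast at h3 ⊢
        linarith
      · subst h
        have h4 := hDs k
        push_cast
        linarith
  have huniq : ∀ (t : ℝ) (k j : ℕ), |t - D k| ≤ k → |t - D j| ≤ j → k = j := by
    intro t k j hk hj
    by_contra hne
    rcases Nat.lt_or_ge k j with h | h
    · have := hsep k j h
      rw [abs_le] at hk hj
      linarith
    · have hjk : j < k := lt_of_le_of_ne h fun e => hne e.symm
      have := hsep j k hjk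
      rw [abs_le] at hk hj
      linarith
  refine ⟨fun x => if ∃ j, Odd j ∧ |dist x 0 - D j| ≤ j then 1 else 0, ?_⟩
  rintro i ⟨f, hf, hrange⟩
  set A := dist (f m₀) 0 with hA
  have hA0 : 0 ≤ A := dist_nonneg
  have hmem : ∀ k : ℕ, A ≤ k → |dist (f (p k)) 0 - D k| ≤ k := by
    intro k hk
    have h1 : dist (f (p k)) 0 ≤ D k + A := by
      calc dist (f (p k)) 0 ≤ dist (f (p k)) (f m₀) + dist (f m₀) 0 := dist_triangle _ _ _
        _ = D k + A := by rw [hf.dist_eq]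
    have h2 : D k - A ≤ dist (f (p k)) 0 := by
      have h3 : D k ≤ dist (f (p k)) 0 + A := by
        calc D k = dist (f (p k)) (f m₀) := (hf.dist_eq _ _).symm
          _ ≤ dist (f (p k)) 0 + dist 0 (f m₀) := dist_triangle _ _ _
          _ = dist (f (p k)) 0 + A := by rw [dist_comm 0 (f m₀)]
      linarith
    rw [abs_le]
    constructor <;> linarith
  have hceil : A ≤ (Nat.ceil A : ℝ) := Nat.le_ceil A
  fin_cases i
  · -- colour 0 : take odd k
    set k : ℕ := 2 * Nat.ceil A + 1 with hk
    have hAk : A ≤ (k : ℝ) := by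
      push_cast
      rw [hk]; push_cast; linarith
    have hmk := hmem k hAk
    have hcol := hrange (Set.mem_range_self (p k))
    simp only [Set.mem_setOf_eq] at hcol
    rw [if_pos ⟨k, ⟨Nat.ceil A, rfl⟩, hmk⟩] at hcol
    exact one_ne_zero hcol
  · -- colour 1 : take even k
    set k : ℕ := 2 * Nat.ceil A + 2 with hk
    have hAk : A ≤ (k : ℝ) := by
      push_cast
      rw [hk]; push_cast; linarith
    have hmk := hmem k hAk
    have hcol := hrange (Set.mem_range_self (p k))
    simp only [Set.mem_setOf_eq] at hcol
    rw [if_neg] at hcol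
    · exact zero_ne_one hcol
    · rintro ⟨j, hjodd, hjle⟩
      have hjk : j = k := huniq _ j k hjle hmk
      subst hjk
      rcases hjodd with ⟨m, hm⟩
      omega
end
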